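/- arXiv:2310.01305 — 16 statements merged into one kernel-verified Lean document; each statement's English description precedes it below -/
import Mathlib

section
/- Let n be a 2-near perfect number with omitted divisors d₁ and d₂, and suppose n = 2^k · p where p is an odd prime and k is a positive integer. Then (after possibly swapping d₁ and d₂) one of the following four cases holds: (1) p = 2^k − 1, with d₁ = 1 and d₂ = p; (2) there exist natural numbers a, b with 0 < a < b ≤ k such that p = 2^(k+1) − 2^a − 2^b − 1, d₁ = 2^a and d₂ = 2^b; (3) there exist natural numbers a, b with 0 < a ≤ k and 0 < b ≤ k such that p · (1 + 2^b) = 2^(k+1) − 2^a − 1, d₁ = 2^a and d₂ = 2^b · p; (4) there exist natural numbers a, b with 0 < a < b ≤ k such that p · (1 + 2^a + 2^b) = 2^(k+1) − 1, d₁ = 2^a · p and d₂ = 2^b · p. -/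
open ArithmeticFunction
open scoped ArithmeticFunction.sigma

lemma tnp_geom (m : ℕ) : ∑ i ∈ Finset.range m, 2 ^ i = 2 ^ m - 1 := by
  induction m with
  | zero => simp
  | succ m ih =>
    rw [Finset.sum_range_succ, ih, pow_succ]
    have : 1 ≤ 2 ^ m := Nat.one_le_two_pow
    omega

lemma tnp_divisor_form {k p d : ℕ} (hp : p.Prime) (hd : d ∣ 2 ^ k * p) :
    ∃ a ≤ k, d = 2 ^ a ∨ d = 2 ^ a * p := by
  obtain ⟨x, y, hx, hy, rfl⟩ := exists_dvd_and_dvd_of_dvd_mul hd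
  obtain ⟨a, ha, rfl⟩ := (Nat.dvd_prime_pow Nat.prime_two).mp hx
  rcases (Nat.dvd_prime hp).mp hy with rfl | rfl
  · exact ⟨a, ha, Or.inl (by ring)⟩
  · exact ⟨a, ha, Or.inr rfl⟩

theorem two_near_perfect_pow_two_mul_prime
    (n k p d₁ d₂ : ℕ) (hk : 0 < k) (hp : p.Prime) (hpodd : Odd p)
    (hn : n = 2 ^ k * p)
    (hd₁ : d₁ ∣ n) (hd₂ : d₂ ∣ n) (hd₁pos : 0 < d₁) (hd₂pos : 0 < d₂)
    (hne : d₁ ≠ d₂) (hσ : σ 1 n = 2 * n + d₁ + d₂) :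
    ∃ e₁ e₂ : ℕ, ((e₁ = d₁ ∧ e₂ = d₂) ∨ (e₁ = d₂ ∧ e₂ = d₁)) ∧
      ((p = 2 ^ k - 1 ∧ e₁ = 1 ∧ e₂ = p) ∨
       (∃ a b : ℕ, 0 < a ∧ a < b ∧ b ≤ k ∧
          p = 2 ^ (k + 1) - 2 ^ a - 2 ^ b - 1 ∧ e₁ = 2 ^ a ∧ e₂ = 2 ^ b) ∨
       (∃ a b : ℕ, 0 < a ∧ a ≤ k ∧ 0 < b ∧ b ≤ k ∧
          p * (1 + 2 ^ b) = 2 ^ (k + 1) - 2 ^ a - 1 ∧ e₁ = 2 ^ a ∧ e₂ = 2 ^ b * p) ∨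
       (∃ a b : ℕ, 0 < a ∧ a < b ∧ b ≤ k ∧
          p * (1 + 2 ^ a + 2 ^ b) = 2 ^ (k + 1) - 1 ∧ e₁ = 2 ^ a * p ∧ e₂ = 2 ^ b * p)) := by
  subst hn
  have hpodd2 : p % 2 = 1 := Nat.odd_iff.mp hpodd
  have hpodd' : ¬ (2 ∣ p) := by omega
  have hcop : Nat.Coprime (2 ^ k) p :=
    Nat.Coprime.pow_left _ ((Nat.coprime_primes Nat.prime_two hp).mpr
      (by rintro rfl; exact hpodd' dvd_rfl))
  -- compute σ
  have hσ2 : σ 1 (2 ^ k) = 2 ^ (k + 1) - 1 := by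
    rw [sigma_one_apply_prime_pow Nat.prime_two, tnp_geom]
  have hσp : σ 1 p = p + 1 := by
    rw [sigma_one_apply, hp.divisors, Finset.sum_insert (by simp [hp.one_lt.ne]),
      Finset.sum_singleton]
    omega
  have hmul : σ 1 (2 ^ k * p) = (2 ^ (k + 1) - 1) * (p + 1) := by
    rw [isMultiplicative_sigma.map_mul_of_coprime hcop, hσ2, hσp]
  -- key linear equation
  have hK : 2 ≤ 2 ^ (k + 1) := by
    calc 2 = 2 ^ 1 := rfl
    _ ≤ 2 ^ (k + 1) := Nat.pow_le_pow_right (by norm_num) (by omega)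
  have key : d₁ + d₂ + p + 1 = 2 ^ (k + 1) := by
    rw [hmul] at hσ
    have h1 : (2 ^ (k + 1) - 1) * (p + 1) + (p + 1) = 2 ^ (k + 1) * p + 2 ^ (k + 1) := by
      have he : (2 ^ (k + 1) - 1) + 1 = 2 ^ (k + 1) := by omega
      calc (2 ^ (k + 1) - 1) * (p + 1) + (p + 1) = ((2 ^ (k + 1) - 1) + 1) * (p + 1) := by ring
      _ = 2 ^ (k + 1) * (p + 1) := by rw [he]
      _ = 2 ^ (k + 1) * p + 2 ^ (k + 1) := by ring
    have h2 : 2 * (2 ^ k * p) = 2 ^ (k + 1) * p := by ring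
    rw [h2] at hσ
    omega
  obtain ⟨a, ha, hda⟩ := tnp_divisor_form hp hd₁
  obtain ⟨b, hb, hdb⟩ := tnp_divisor_form hp hd₂
  have hpa : 1 ≤ 2 ^ a := Nat.one_le_two_pow
  have hpb : 1 ≤ 2 ^ b := Nat.one_le_two_pow
  have hp3 : 3 ≤ p := by
    rcases hp.two_le.lt_or_eq with h | h
    · omega
    · exact absurd h.symm (by rintro rfl; exact hpodd' dvd_rfl)
  have hdvda : a ≠ 0 → 2 ∣ 2 ^ a := fun h => dvd_pow_self 2 h
  have hdvdb : b ≠ 0 → 2 ∣ 2 ^ b := fun h => dvd_pow_self 2 h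
  have hKdvd : 2 ∣ 2 ^ (k + 1) := dvd_pow_self 2 (by omega)
  rcases hda with rfl | rfl <;> rcases hdb with rfl | rfl
  · -- both powers of two: case 2
    have hab : a ≠ b := by rintro rfl; exact hne rfl
    -- parity: a, b ≥ 1
    have ha0 : a ≠ 0 := by
      rintro rfl
      simp only [pow_zero] at key
      have hb0 : b ≠ 0 := by rintro rfl; simp at key; omega
      have := hdvdb hb0
      omega
    have hb0 : b ≠ 0 := by
      rintro rfl
      simp only [pow_zero] at key
      have := hdvda ha0
      omega
    rcases Nat.lt_or_ge a b with hlt | hge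
    · exact ⟨2 ^ a, 2 ^ b, Or.inl ⟨rfl, rfl⟩, Or.inr (Or.inl ⟨a, b, by omega, hlt, hb, by omega, rfl, rfl⟩)⟩
    · have hlt : b < a := by omega
      exact ⟨2 ^ b, 2 ^ a, Or.inr ⟨rfl, rfl⟩, Or.inr (Or.inl ⟨b, a, by omega, hlt, ha, by omega, rfl, rfl⟩)⟩
  · -- d₁ = 2^a, d₂ = 2^b * p : case 1 or 3
    have hYpos : 1 ≤ 2 ^ b * p := Nat.one_le_iff_ne_zero.mpr (by positivity)
    by_cases ha0 : a = 0
    · subst ha0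
      have hb0 : b = 0 := by
        by_contra hb0
        have h2b : 2 ∣ 2 ^ b * p := Dvd.dvd.mul_right (hdvdb hb0) p
        simp only [pow_zero] at key
        omega
      subst hb0
      simp only [pow_zero, one_mul] at key ⊢
      refine ⟨1, p, Or.inl ⟨rfl, rfl⟩, Or.inl ⟨?_, rfl, rfl⟩⟩
      have : 2 ^ (k + 1) = 2 * 2 ^ k := by ring
      omega
    · have hb0 : b ≠ 0 := by
        rintro rfl
        simp only [pow_zero, one_mul] at key
        have := hdvda ha0
        omega
      refine ⟨2 ^ a, 2 ^ b * p, Or.inl ⟨rfl, rfl⟩,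
        Or.inr (Or.inr (Or.inl ⟨a, b, by omega, ha, by omega, hb, ?_, rfl, rfl⟩))⟩
      have hexp : p * (1 + 2 ^ b) = p + 2 ^ b * p := by ring
      omega
  · -- d₁ = 2^a * p, d₂ = 2^b : symmetric, swap
    have hYpos : 1 ≤ 2 ^ a * p := Nat.one_le_iff_ne_zero.mpr (by positivity)
    by_cases hb0 : b = 0
    · subst hb0
      have ha0 : a = 0 := by
        by_contra ha0
        have h2a : 2 ∣ 2 ^ a * p := Dvd.dvd.mul_right (hdvda ha0) p
        simp only [pow_zero] at key
        omega
      subst ha0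
      simp only [pow_zero, one_mul] at key ⊢
      refine ⟨1, p, Or.inr ⟨rfl, rfl⟩, Or.inl ⟨?_, rfl, rfl⟩⟩
      have : 2 ^ (k + 1) = 2 * 2 ^ k := by ring
      omega
    · have ha0 : a ≠ 0 := by
        rintro rfl
        simp only [pow_zero, one_mul] at key
        have := hdvdb hb0
        omega
      refine ⟨2 ^ b, 2 ^ a * p, Or.inr ⟨rfl, rfl⟩,
        Or.inr (Or.inr (Or.inl ⟨b, a, by omega, hb, by omega, ha, ?_, rfl, rfl⟩))⟩
      have hexp : p * (1 + 2 ^ a) = p + 2 ^ a * p := by ring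
      omega
  · -- both of the form 2^_ * p : case 4
    have hab : a ≠ b := by
      rintro rfl; exact hne rfl
    have ha0 : a ≠ 0 := by
      rintro rfl
      simp only [pow_zero, one_mul] at key
      have hb0 : b ≠ 0 := by rintro rfl; exact hab rfl
      have h2b : 2 ∣ 2 ^ b * p := Dvd.dvd.mul_right (hdvdb hb0) p
      omega
    have hb0 : b ≠ 0 := by
      rintro rfl
      simp only [pow_zero, one_mul] at key
      have h2a : 2 ∣ 2 ^ a * p := Dvd.dvd.mul_right (hdvda ha0) p
      omega
    rcases Nat.lt_or_ge a b with hlt | hge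
    · refine ⟨2 ^ a * p, 2 ^ b * p, Or.inl ⟨rfl, rfl⟩,
        Or.inr (Or.inr (Or.inr ⟨a, b, by omega, hlt, hb, ?_, rfl, rfl⟩))⟩
      have hexp : p * (1 + 2 ^ a + 2 ^ b) = p + 2 ^ a * p + 2 ^ b * p := by ring
      omega
    · have hlt : b < a := by omega
      refine ⟨2 ^ b * p, 2 ^ a * p, Or.inr ⟨rfl, rfl⟩,
        Or.inr (Or.inr (Or.inr ⟨b, a, by omega, hlt, ha, ?_, rfl, rfl⟩))⟩
      have hexp : p * (1 + 2 ^ b + 2 ^ a) = p + 2 ^ b * p + 2 ^ a * p := by ring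
      omega
end

section
/- Let n be a 2-near perfect number of the form n = 2^k · p^2, where p is an odd prime and k is a positive integer. Then n ∈ {18, 36, 200}. -/
open ArithmeticFunction
open scoped ArithmeticFunction.sigma

private lemma two_pow_sum' (k : ℕ) : ∑ i ∈ Finset.range (k+1), 2 ^ i = 2 ^ (k+1) - 1 := by
  induction k with
  | zero => simp
  | succ m ih =>
    rw [Finset.sum_range_succ, ih]
    have h1 : 1 ≤ (2:ℕ)^(m+1) := Nat.one_le_two_pow
    have h2 : (2:ℕ)^(m+1+1) = 2^(m+1) + 2^(m+1) := by ring
    omega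

private lemma sigma_setup' (k p : ℕ) (hp : p.Prime) (hpodd : Odd p) :
    σ 1 (2^k * p^2) + (1 + p + p^2) = 2^(k+1) * (1 + p + p^2) := by
  have hne : p ≠ 2 := by rintro rfl; exact (Nat.not_odd_iff_even.mpr even_two) hpodd
  have hcop : Nat.Coprime (2^k) (p^2) :=
    Nat.Coprime.pow _ _ ((Nat.coprime_primes Nat.prime_two hp).mpr (by omega))
  have h1 : σ 1 (2^k) = 2^(k+1) - 1 := by
    rw [sigma_one_apply_prime_pow Nat.prime_two]; exact two_pow_sum' k
  have h2 : σ 1 (p^2) = 1 + p + p^2 := by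
    rw [sigma_one_apply_prime_pow hp]
    simp [Finset.sum_range_succ]
  rw [isMultiplicative_sigma.map_mul_of_coprime hcop, h1, h2]
  have h3 : 1 ≤ (2:ℕ)^(k+1) := Nat.one_le_two_pow
  have h4 : (2^(k+1) - 1) * (1+p+p^2) = 2^(k+1)*(1+p+p^2) - (1+p+p^2) := by
    rw [Nat.sub_mul, one_mul]
  have h5 : 1+p+p^2 ≤ 2^(k+1)*(1+p+p^2) := Nat.le_mul_of_pos_left _ (by positivity)
  omega

private lemma two_pow_mul_odd' {a y m M : ℕ} (hm : m % 2 = 1) (hM : M % 2 = 1)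
    (h : 2^a * m = 2^y * M) : a = y ∧ m = M := by
  have keyl : ∀ {a y m M : ℕ}, m % 2 = 1 → M % 2 = 1 → a ≤ y → 2^a*m = 2^y*M → a = y ∧ m = M := by
    intro a y m M hm hM hle h
    have h1 : 2^a * m = 2^a * (2^(y-a) * M) := by
      rw [h, ← mul_assoc, ← pow_add]
      congr 2
      omega
    have hm' : m = 2^(y-a) * M := Nat.eq_of_mul_eq_mul_left (by positivity) h1
    have h0 : y - a = 0 := by
      by_contra hne
      have h2 : 2 ∣ 2^(y-a) := dvd_pow_self 2 hne
      have h3 : 2 ∣ m := hm' ▸ h2.mul_right M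
      omega
    constructor
    · omega
    · rw [hm', h0]; simp
  rcases le_total a y with hle | hle
  · exact keyl hm hM hle h
  · obtain ⟨h1, h2⟩ := keyl hM hm hle h.symm
    exact ⟨h1.symm, h2.symm⟩

private lemma pow2_eq_add' {x y z : ℕ} (h : 2^x = 2^y + 2^z) : x = y + 1 ∧ y = z := by
  have hyz : y = z := by
    by_contra hne
    rcases Nat.lt_or_ge y z with hlt | hge
    · have hs : (2:ℕ)^y * 2^(z-y) = 2^z := by rw [← pow_add]; congr 1; omega
      have h1 : 2^x * 1 = 2^y * (1 + 2^(z-y)) := by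
        have hd : (2:ℕ)^y * (1 + 2^(z-y)) = 2^y + 2^z := by rw [mul_add, mul_one, hs]
        rw [mul_one, hd, h]
      have he : 2 ∣ 2^(z-y) := dvd_pow_self 2 (by omega)
      have hp1 : 1 ≤ (2:ℕ)^(z-y) := Nat.one_le_two_pow
      have := two_pow_mul_odd' (by omega) (by omega) h1
      omega
    · have hlt : z < y := by omega
      have hs : (2:ℕ)^z * 2^(y-z) = 2^y := by rw [← pow_add]; congr 1; omega
      have h1 : 2^x * 1 = 2^z * (1 + 2^(y-z)) := by
        have hd : (2:ℕ)^z * (1 + 2^(y-z)) = 2^z + 2^y := by rw [mul_add, mul_one, hs]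
        rw [mul_one, hd, h]; omega
      have he : 2 ∣ 2^(y-z) := dvd_pow_self 2 (by omega)
      have hp1 : 1 ≤ (2:ℕ)^(y-z) := Nat.one_le_two_pow
      have := two_pow_mul_odd' (by omega) (by omega) h1
      omega
  subst hyz
  have h2 : (2:ℕ)^x = 2^(y+1) := by rw [h]; ring
  have := Nat.pow_right_injective (le_refl 2) h2
  omega

set_option maxHeartbeats 4000000 in
private lemma key' (k p : ℕ) (hk : 0 < k) (hp : p.Prime) (hpodd : Odd p)
    (b c a : ℕ) (hb : b ≤ 2) (hc : c ≤ 2)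
    (ha1 : 1 ≤ a) (hak : a ≤ k)
    (hE : 2^(k+1) * (p+1) = p^2 + p + 1 + p^b + 2^a * p^c) :
    2 ^ k * p ^ 2 = 18 ∨ 2 ^ k * p ^ 2 = 36 ∨ 2 ^ k * p ^ 2 = 200 := by
  have hp3 : 3 ≤ p := by
    have h2 := hp.two_le
    have hne : p ≠ 2 := by rintro rfl; exact (Nat.not_odd_iff_even.mpr even_two) hpodd
    omega
  have hp2 : p % 2 = 1 := Nat.odd_iff.mp hpodd
  have hpp2 : p^2 % 2 = 1 := by
    have := Nat.pow_mod p 2 2; rw [hp2] at this; simpa using this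
  have hQ4 : 4 ≤ 2^(k+1) := by
    calc (4:ℕ) = 2^2 := by norm_num
    _ ≤ 2^(k+1) := Nat.pow_le_pow_right (by norm_num) (by omega)
  have hA2 : 2 ≤ 2^a := by
    calc (2:ℕ) = 2^1 := by norm_num
    _ ≤ 2^a := Nat.pow_le_pow_right (by norm_num) ha1
  have hAQ : 2^a * 2 ≤ 2^(k+1) := by
    calc (2:ℕ)^a*2 = 2^(a+1) := by ring
    _ ≤ 2^(k+1) := Nat.pow_le_pow_right (by norm_num) (by omega)
  have hAdQ : (2:ℕ)^a ∣ 2^(k+1) := pow_dvd_pow 2 (by omega)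
  have h4Q : (4:ℕ) ∣ 2^(k+1) := by
    have h := pow_dvd_pow 2 (show 2 ≤ k+1 by omega)
    norm_num at h
    exact h
  -- integer versions
  have hp3Z : (3:ℤ) ≤ (p:ℤ) := by exact_mod_cast hp3
  have hp0 : (p:ℤ) ≠ 0 := by omega
  have hQ4Z : (4:ℤ) ≤ 2^(k+1) := by exact_mod_cast hQ4
  have hA2Z : (2:ℤ) ≤ 2^a := by exact_mod_cast hA2
  have hAQZ : (2:ℤ)^a * 2 ≤ 2^(k+1) := by exact_mod_cast hAQ
  have hAZ : (2:ℤ)^a ∣ 2^(k+1) := by exact_mod_cast hAdQ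
  have hexp : (2:ℕ)^(k+1)*(p+1) = 2^(k+1)*p + 2^(k+1) := by ring
  interval_cases b <;> interval_cases c
  -- case b=0, c=0 : n = 18
  · simp only [pow_zero, mul_one] at hE
    have hEZ : (2:ℤ)^(k+1)*p + 2^(k+1) = p^2 + p + 2 + 2^a := by
      have hEe : (2:ℕ)^(k+1)*p + 2^(k+1) = p^2 + p + 2 + 2^a := by omega
      exact_mod_cast hEe
    have hQp : (p:ℤ) + 1 ≤ 2^(k+1) := by nlinarith [hEZ, hA2Z, hp3Z]
    have hple : p ≤ 3 := by
      have hZ : (p:ℤ) ≤ 3 := by nlinarith [hEZ, hAQZ, hQp, hp3Z]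
      exact_mod_cast hZ
    have hpe : p = 3 := by omega
    subst hpe
    norm_num at hE
    have hAe : (2:ℕ)^a = 2 ∧ (2:ℕ)^(k+1) = 4 := by omega
    have hk1 : k = 1 := by
      have := Nat.pow_right_injective (le_refl 2) (show (2:ℕ)^(k+1) = 2^2 by rw [hAe.2])
      omega
    subst hk1
    left; norm_num
  -- case b=0, c=1 : impossible
  · exfalso
    simp only [pow_zero, pow_one] at hE
    have hEZ : (2:ℤ)^(k+1)*p + 2^(k+1) = p^2 + p + 2 + 2^a*p := by
      have hEe : (2:ℕ)^(k+1)*p + 2^(k+1) = p^2 + p + 2 + 2^a*p := by omega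
      exact_mod_cast hEe
    have hdvd : (p:ℤ) ∣ 2^(k+1) - 2 := ⟨p+1+2^a-2^(k+1), by linear_combination hEZ⟩
    have h2Z : (2:ℤ)*2^k = 2^(k+1) := by ring
    have hd2 : (p:ℤ) ∣ 2*(2^k - 1) := by
      have he : (2:ℤ)*(2^k-1) = 2^(k+1) - 2 := by ring
      rw [he]; exact hdvd
    obtain ⟨t', ht'⟩ := hpodd
    have hcop : IsCoprime (p:ℤ) 2 := ⟨1, -(t':ℤ), by push_cast [ht']; ring⟩
    have hdk : (p:ℤ) ∣ 2^k - 1 := hcop.dvd_of_dvd_mul_left hd2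
    have h2k : (2:ℕ) ≤ 2^k := by
      calc (2:ℕ) = 2^1 := by norm_num
      _ ≤ 2^k := Nat.pow_le_pow_right (by norm_num) (by omega)
    have h2kZ : (2:ℤ) ≤ 2^k := by exact_mod_cast h2k
    have hle : (p:ℤ) ≤ 2^k - 1 := Int.le_of_dvd (by linarith) hdk
    have hQge : (2:ℤ)*p + 2 ≤ 2^(k+1) := by rw [← h2Z]; linarith
    nlinarith [hEZ, mul_le_mul_of_nonneg_right hAQZ (show (0:ℤ) ≤ p by linarith),
      mul_le_mul_of_nonneg_right hQge (show (0:ℤ) ≤ p by linarith), hp3Z]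
  -- case b=0, c=2 : n = 36
  · simp only [pow_zero] at hE
    have hEZ : (2:ℤ)^(k+1)*p + 2^(k+1) = p^2 + p + 2 + 2^a*p^2 := by
      have hEe : (2:ℕ)^(k+1)*p + 2^(k+1) = p^2 + p + 2 + 2^a*p^2 := by omega
      exact_mod_cast hEe
    have hdvd : (p:ℤ) ∣ 2^(k+1) - 2 := ⟨p+1+2^a*p-2^(k+1), by linear_combination hEZ⟩
    obtain ⟨t, ht⟩ := hdvd
    have hQt : (2:ℤ)^(k+1) = 2 + p*t := by linarith
    have ht1 : 1 ≤ t := by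
      by_contra hcon
      push_neg at hcon
      have : (p:ℤ)*t ≤ 0 := mul_nonpos_of_nonneg_of_nonpos (by linarith) (by linarith)
      linarith
    have hstep : (p:ℤ)*(p*t + t + 1) = p*(p + 2^a*p) := by
      linear_combination hEZ - ((p:ℤ)+1)*hQt
    have hstep' : (p:ℤ)*t + t + 1 = p + 2^a*p := mul_left_cancel₀ hp0 hstep
    have hdw : (p:ℤ) ∣ t + 1 := ⟨1 + 2^a - t, by linear_combination hstep'⟩
    obtain ⟨w, hw'⟩ := hdw
    have hw1 : 1 ≤ w := by
      by_contra hcon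
      push_neg at hcon
      have : (p:ℤ)*w ≤ 0 := mul_nonpos_of_nonneg_of_nonpos (by linarith) (by linarith)
      linarith
    have hwp : (p:ℤ)*(w*(p+1)) = p*(2^a+2) := by
      linear_combination hstep' - ((p:ℤ)+1)*hw'
    have hw : (w:ℤ)*(p+1) = 2^a+2 := mul_left_cancel₀ hp0 hwp
    have hQw : (2:ℤ)^(k+1) + p = p^2*w + 2 := by
      linear_combination hQt + (p:ℤ)*hw'
    have hI : (2:ℤ)^a*p + p + 2 = 2^(k+1) + w*p := by
      linear_combination -(p:ℤ)*hw - hQw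
    rcases (by omega : w = 1 ∨ 2 ≤ w) with hwe | hw2
    · subst hwe
      have hQA : (2:ℤ)^(k+1) = 2^a*p + 2 := by linarith
      have hd2 : (2:ℤ)^a ∣ 2 := by
        have hsub : (2:ℤ)^a ∣ (2^(k+1) - 2^a*p) := dvd_sub hAZ (dvd_mul_right _ _)
        rw [hQA] at hsub
        simpa using hsub
      have hle2 : (2:ℤ)^a ≤ 2 := Int.le_of_dvd (by norm_num) hd2
      have hAe : (2:ℤ)^a = 2 := le_antisymm hle2 hA2Z
      have hpZ : (p:ℤ) = 3 := by linarith [hw]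
      have hp3e : p = 3 := by exact_mod_cast hpZ
      have hQ8 : (2:ℤ)^(k+1) = 8 := by
        rw [hpZ] at hQw; linarith
      have hQ8' : (2:ℕ)^(k+1) = 8 := by exact_mod_cast hQ8
      have hk2 : k = 2 := by
        have := Nat.pow_right_injective (le_refl 2) (show (2:ℕ)^(k+1) = 2^3 by rw [hQ8'])
        omega
      subst hk2; subst hp3e
      right; left; norm_num
    · exfalso
      have hX : (w:ℤ)*p - p - 2 = 2^a*p - 2^(k+1) := by linarith
      have hXd : (2:ℤ)^a ∣ w*p - p - 2 := by
        rw [hX]; exact dvd_sub (dvd_mul_right _ _) hAZ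
      have hXpos : 0 < (w:ℤ)*p - p - 2 := by
        nlinarith [mul_nonneg (show (0:ℤ) ≤ w - 2 by linarith) (show (0:ℤ) ≤ (p:ℤ) by linarith)]
      have hwexp : (w:ℤ)*p + w = 2^a + 2 := by linear_combination hw
      have hXlt : (w:ℤ)*p - p - 2 < 2^a := by linarith
      have := Int.le_of_dvd hXpos hXd
      linarith
  -- case b=1, c=0 : impossible
  · exfalso
    simp only [pow_one, pow_zero, mul_one] at hE
    have hEZ : (2:ℤ)^(k+1)*p + 2^(k+1) = p^2 + 2*p + 1 + 2^a := by
      have hEe : (2:ℕ)^(k+1)*p + 2^(k+1) = p^2 + 2*p + 1 + 2^a := by omega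
      exact_mod_cast hEe
    have hdvdZ : ((p:ℤ)+1) ∣ (2:ℤ)^a := ⟨2^(k+1)-(p+1), by linear_combination -hEZ⟩
    have hdvd : (p+1) ∣ 2^a := by exact_mod_cast hdvdZ
    obtain ⟨e, hea, hpe⟩ := (Nat.dvd_prime_pow Nat.prime_two).mp hdvd
    have hEE : 2^(k+1+e) = 2^(2*e) + 2^a := by
      have h1 : (2:ℕ)^(k+1+e) = 2^(k+1)*2^e := by rw [pow_add]
      have h2 : (2:ℕ)^(2*e) = 2^e*2^e := by rw [two_mul, pow_add]
      have h3 : (p+1)*(p+1) = p^2+2*p+1 := by ring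
      rw [h1, h2, ← hpe]
      omega
    obtain ⟨hx, hyz⟩ := pow2_eq_add' hEE
    omega
  -- case b=1, c=1 : impossible
  · exfalso
    simp only [pow_one] at hE
    have hEZ : (2:ℤ)^(k+1)*p + 2^(k+1) = p^2 + 2*p + 1 + 2^a*p := by
      have hEe : (2:ℕ)^(k+1)*p + 2^(k+1) = p^2 + 2*p + 1 + 2^a*p := by omega
      exact_mod_cast hEe
    have hdvdZ : ((p:ℤ)+1) ∣ (2:ℤ)^a*p := ⟨2^(k+1)-(p+1), by linear_combination -hEZ⟩
    have hdvd : (p+1) ∣ 2^a*p := by exact_mod_cast hdvdZ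
    have hcop : Nat.Coprime (p+1) p := by simp [Nat.coprime_self_add_left]
    have hdvd2 : (p+1) ∣ 2^a := hcop.dvd_of_dvd_mul_right hdvd
    obtain ⟨e, hea, hpe⟩ := (Nat.dvd_prime_pow Nat.prime_two).mp hdvd2
    have hEE : 2^(2*e) + 2^a*p = 2^(2*e)*2^(k+1-e) := by
      have h1 : (2:ℕ)^(2*e)*2^(k+1-e) = 2^(k+1)*2^e := by
        rw [← pow_add, ← pow_add]; congr 1; omega
      have h2 : (2:ℕ)^(2*e) = 2^e*2^e := by rw [two_mul, pow_add]
      have h3 : (p+1)*(p+1) = p^2+2*p+1 := by ring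
      have h4 : (2:ℕ)^(k+1)*(p+1) = 2^(k+1)*p + 2^(k+1) := by ring
      rw [h1, h2, ← hpe]
      omega
    have hM : 2^a*p = 2^(2*e)*(2^(k+1-e) - 1) := by
      have h3 := Nat.mul_sub (2^(2*e)) (2^(k+1-e)) 1
      rw [mul_one] at h3
      omega
    have hModd : (2^(k+1-e) - 1) % 2 = 1 := by
      have hd : 2 ∣ 2^(k+1-e) := dvd_pow_self 2 (by omega)
      have h1 : 1 ≤ (2:ℕ)^(k+1-e) := Nat.one_le_two_pow
      omega
    obtain ⟨hae, hpM⟩ := two_pow_mul_odd' hp2 hModd hM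
    have h1 : 1 ≤ (2:ℕ)^(k+1-e) := Nat.one_le_two_pow
    have hee : (2:ℕ)^e = 2^(k+1-e) := by omega
    have := Nat.pow_right_injective (le_refl 2) hee
    omega
  -- case b=1, c=2 : impossible
  · exfalso
    simp only [pow_one] at hE
    have hEZ : (2:ℤ)^(k+1)*p + 2^(k+1) = p^2 + 2*p + 1 + 2^a*p^2 := by
      have hEe : (2:ℕ)^(k+1)*p + 2^(k+1) = p^2 + 2*p + 1 + 2^a*p^2 := by omega
      exact_mod_cast hEe
    have hdvdZ : ((p:ℤ)+1) ∣ (2:ℤ)^a*p^2 := ⟨2^(k+1)-(p+1), by linear_combination -hEZ⟩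
    have hdvd : (p+1) ∣ 2^a*p^2 := by exact_mod_cast hdvdZ
    have hcop : Nat.Coprime (p+1) (p^2) := by
      have : Nat.Coprime (p+1) p := by simp [Nat.coprime_self_add_left]
      exact this.pow_right 2
    have hdvd2 : (p+1) ∣ 2^a := hcop.dvd_of_dvd_mul_right hdvd
    obtain ⟨e, hea, hpe⟩ := (Nat.dvd_prime_pow Nat.prime_two).mp hdvd2
    have hEE : 2^(2*e) + 2^a*p^2 = 2^(2*e)*2^(k+1-e) := by
      have h1 : (2:ℕ)^(2*e)*2^(k+1-e) = 2^(k+1)*2^e := by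
        rw [← pow_add, ← pow_add]; congr 1; omega
      have h2 : (2:ℕ)^(2*e) = 2^e*2^e := by rw [two_mul, pow_add]
      have h3 : (p+1)*(p+1) = p^2+2*p+1 := by ring
      have h4 : (2:ℕ)^(k+1)*(p+1) = 2^(k+1)*p + 2^(k+1) := by ring
      rw [h1, h2, ← hpe]
      omega
    have hM : 2^a*p^2 = 2^(2*e)*(2^(k+1-e) - 1) := by
      have h3 := Nat.mul_sub (2^(2*e)) (2^(k+1-e)) 1
      rw [mul_one] at h3
      omega
    have hModd : (2^(k+1-e) - 1) % 2 = 1 := by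
      have hd : 2 ∣ 2^(k+1-e) := dvd_pow_self 2 (by omega)
      have h1 : 1 ≤ (2:ℕ)^(k+1-e) := Nat.one_le_two_pow
      omega
    obtain ⟨hae, hpM⟩ := two_pow_mul_odd' hpp2 hModd hM
    have h1 : 1 ≤ (2:ℕ)^(k+1-e) := Nat.one_le_two_pow
    have hsum : p^2 + 1 = 2^(k+1-e) := by omega
    have hm2 : 2 ≤ k+1-e := by
      by_contra hcon
      push_neg at hcon
      have : (2:ℕ)^(k+1-e) ≤ 2^1 := Nat.pow_le_pow_right (by norm_num) (by omega)
      nlinarith [hp3]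
    have h4d : (4:ℕ) ∣ p^2 + 1 := by
      rw [hsum]
      have h := pow_dvd_pow 2 hm2
      norm_num at h
      exact h
    obtain ⟨t, ht⟩ := hpodd
    have hps : p^2 = 4*(t*t+t)+1 := by rw [ht]; ring
    omega
  -- case b=2, c=0 : impossible
  · exfalso
    simp only [pow_zero, mul_one] at hE
    have hEZ : (2:ℤ)^(k+1)*p + 2^(k+1) = 2*p^2 + p + 1 + 2^a := by
      have hEe : (2:ℕ)^(k+1)*p + 2^(k+1) = 2*p^2 + p + 1 + 2^a := by omega
      exact_mod_cast hEe
    have h1 : 2*(p:ℤ) ≤ 2^(k+1) := by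
      by_contra hcon
      push_neg at hcon
      have hle : (2:ℤ)^(k+1) ≤ 2*p - 1 := by omega
      have := mul_le_mul_of_nonneg_right hle (show (0:ℤ) ≤ p by linarith)
      nlinarith [hA2Z]
    have h2 : (2:ℤ)^(k+1) ≤ 2*p := by
      by_contra hcon
      push_neg at hcon
      have hge : 2*(p:ℤ) + 1 ≤ 2^(k+1) := by omega
      have := mul_le_mul_of_nonneg_right hge (show (0:ℤ) ≤ p by linarith)
      nlinarith [hAQZ]
    have hQ2p : (2:ℤ)^(k+1) = 2*p := le_antisymm h2 h1
    have hpk : (p:ℤ) = 2^k := by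
      have he : (2:ℤ)*2^k = 2^(k+1) := by ring
      linarith [hQ2p, he]
    have hpk' : p = 2^k := by exact_mod_cast hpk
    have : 2 ∣ p := hpk' ▸ dvd_pow_self 2 (by omega)
    omega
  -- case b=2, c=1 : n = 200
  · simp only [pow_one] at hE
    have hEZ : (2:ℤ)^(k+1)*p + 2^(k+1) = 2*p^2 + p + 1 + 2^a*p := by
      have hEe : (2:ℕ)^(k+1)*p + 2^(k+1) = 2*p^2 + p + 1 + 2^a*p := by omega
      exact_mod_cast hEe
    have hdvd : (p:ℤ) ∣ 2^(k+1) - 1 := ⟨2*p+1+2^a-2^(k+1), by linear_combination hEZ⟩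
    have hdvdN : p ∣ 2^(k+1) - 1 := by
      have h1 : ((2^(k+1) - 1 : ℕ) : ℤ) = 2^(k+1) - 1 := by
        push_cast [Nat.cast_sub (Nat.one_le_two_pow)]
        ring
      rw [← h1] at hdvd
      exact_mod_cast hdvd
    obtain ⟨m, hm'⟩ := hdvdN
    rw [mul_comm] at hm'
    have hQm : 2^(k+1) = m*p + 1 := by
      have h1 : 1 ≤ (2:ℕ)^(k+1) := Nat.one_le_two_pow
      omega
    have hQmZ : (2:ℤ)^(k+1) = m*p + 1 := by exact_mod_cast hQm
    have hstep : (p:ℤ)*(m*(p+1)) = p*(2*p+2^a) := by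
      linear_combination hEZ - ((p:ℤ)+1)*hQmZ
    have hmeq : (m:ℤ)*(p+1) = 2*p+2^a := mul_left_cancel₀ hp0 hstep
    have hmeqN : m*(p+1) = 2*p+2^a := by exact_mod_cast hmeq
    have hQe : 2 ∣ 2^(k+1) := dvd_pow_self 2 (by omega)
    have hmp : m*p % 2 = m % 2 := by
      rw [Nat.mul_mod, hp2, mul_one]
      exact Nat.mod_mod_of_dvd m (dvd_refl 2)
    have hmodd : m % 2 = 1 := by omega
    have hexp2 : m*(p+1) = m*p+m := by ring
    have hsz : m*p + 2*m ≤ 4*p+1 := by omega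
    have hm3 : m ≤ 3 := by
      by_contra hcon
      push_neg at hcon
      have : 4*p ≤ m*p := Nat.mul_le_mul_right p (by omega)
      omega
    rcases (by omega : m = 1 ∨ m = 3) with hme | hme
    · exfalso
      subst hme
      omega
    · subst hme
      have hpa : p + 3 = 2^a := by omega
      have ha3 : 3 ≤ a := by
        by_contra hcon
        push_neg at hcon
        have : (2:ℕ)^a ≤ 2^2 := Nat.pow_le_pow_right (by norm_num) (by omega)
        norm_num at this
        omega
      rcases (by omega : a = 3 ∨ 4 ≤ a) with hae | ha4
      · subst hae
        norm_num at hpa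
        have hp5 : p = 5 := by omega
        have hQ16 : (2:ℕ)^(k+1) = 16 := by omega
        have hk3 : k = 3 := by
          have := Nat.pow_right_injective (le_refl 2) (show (2:ℕ)^(k+1) = 2^4 by rw [hQ16])
          omega
        subst hk3; subst hp5
        right; right; norm_num
      · exfalso
        have h16 : (16:ℕ) ∣ 2^a := by
          have h := pow_dvd_pow 2 ha4
          norm_num at h
          exact h
        rcases le_or_gt (k+1) 3 with hle | hlt
        · have hq8 : (2:ℕ)^(k+1) ≤ 8 := by
            calc (2:ℕ)^(k+1) ≤ 2^3 := Nat.pow_le_pow_right (by norm_num) hle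
            _ = 8 := by norm_num
          have : (16:ℕ) ≤ 2^a := Nat.le_of_dvd (by positivity) h16
          omega
        · have h16Q : (16:ℕ) ∣ 2^(k+1) := by
            have h := pow_dvd_pow 2 (show 4 ≤ k+1 by omega)
            norm_num at h
            exact h
          omega
  -- case b=2, c=2 : impossible
  · exfalso
    have hEZ : (2:ℤ)^(k+1)*p + 2^(k+1) = 2*p^2 + p + 1 + 2^a*p^2 := by
      have hEe : (2:ℕ)^(k+1)*p + 2^(k+1) = 2*p^2 + p + 1 + 2^a*p^2 := by omega
      exact_mod_cast hEe
    have hdvd : (p:ℤ) ∣ 2^(k+1) - 1 := ⟨2*p+1+2^a*p-2^(k+1), by linear_combination hEZ⟩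
    obtain ⟨m, hm'⟩ := hdvd
    have hQm : (2:ℤ)^(k+1) = 1 + p*m := by linarith
    have hstep : (p:ℤ)*(m*(p+1)) = p*((2+2^a)*p) := by
      linear_combination hEZ - ((p:ℤ)+1)*hQm
    have hmeq : (m:ℤ)*(p+1) = (2+2^a)*p := mul_left_cancel₀ hp0 hstep
    have hcop : IsCoprime (p:ℤ) ((p:ℤ)+1) := ⟨-1, 1, by ring⟩
    have hpm : (p:ℤ) ∣ m := hcop.dvd_of_dvd_mul_right ⟨2+2^a, by linear_combination hmeq⟩
    obtain ⟨w, hw'⟩ := hpm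
    have hstep2 : (p:ℤ)*(w*(p+1)) = p*(2+2^a) := by
      linear_combination hmeq - ((p:ℤ)+1)*hw'
    have hweq : (w:ℤ)*(p+1) = 2+2^a := mul_left_cancel₀ hp0 hstep2
    have hQw : (2:ℤ)^(k+1) = 1 + p^2*w := by
      linear_combination hQm + (p:ℤ)*hw'
    have hw1 : 1 ≤ w := by
      by_contra hcon
      push_neg at hcon
      have : (w:ℤ)*(p+1) ≤ 0 := mul_nonpos_of_nonpos_of_nonneg (by linarith) (by linarith)
      linarith
    have h2Q : (2:ℤ) ∣ 2^(k+1) := by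
      have : (2:ℕ) ∣ 2^(k+1) := dvd_pow_self 2 (by omega)
      exact_mod_cast this
    have hwodd : ¬ (2:ℤ) ∣ w := by
      rintro ⟨w', rfl⟩
      obtain ⟨q', hq'⟩ := h2Q
      have hx : (p:ℤ)^2*(2*w') = 2*(p^2*w') := by ring
      omega
    rcases (by omega : w = 1 ∨ 3 ≤ w) with hwe | hw3
    · subst hwe
      have h4Q' : (4:ℤ) ∣ 2^(k+1) := by exact_mod_cast h4Q
      obtain ⟨t, ht⟩ := hpodd
      have htZ : (p:ℤ) = 2*(t:ℤ)+1 := by exact_mod_cast ht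
      have hps : (p:ℤ)^2 = 4*((t:ℤ)*t+t)+1 := by rw [htZ]; ring
      obtain ⟨q', hq'⟩ := h4Q'
      omega
    · have hId : (w:ℤ)*p - 2*p - 1 = 2^a*p - 2^(k+1) := by
        linear_combination (p:ℤ)*hweq + hQw
      have hXd : (2:ℤ)^a ∣ w*p - 2*p - 1 := by
        rw [hId]; exact dvd_sub (dvd_mul_right _ _) hAZ
      have hXpos : 0 < (w:ℤ)*p - 2*p - 1 := by
        nlinarith [mul_nonneg (show (0:ℤ) ≤ w - 3 by linarith) (show (0:ℤ) ≤ (p:ℤ) by linarith)]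
      have hwexp : (w:ℤ)*p + w = 2 + 2^a := by linear_combination hweq
      have hXlt : (w:ℤ)*p - 2*p - 1 < 2^a := by linarith
      have := Int.le_of_dvd hXpos hXd
      linarith

theorem two_near_perfect_pow_two_mul_prime_sq
    (n k p : ℕ) (hk : 0 < k) (hp : p.Prime) (hpodd : Odd p)
    (hn : n = 2 ^ k * p ^ 2)
    (h2np : ∃ d₁ d₂ : ℕ, d₁ ∣ n ∧ d₂ ∣ n ∧ 0 < d₁ ∧ 0 < d₂ ∧ d₁ ≠ d₂ ∧
      σ 1 n = 2 * n + d₁ + d₂) :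
    n = 18 ∨ n = 36 ∨ n = 200 := by
  obtain ⟨d₁, d₂, hd₁, hd₂, -, -, -, heq⟩ := h2np
  have hσ := sigma_setup' k p hp hpodd
  rw [hn] at hd₁ hd₂ heq
  rw [heq] at hσ
  have hp2 : p % 2 = 1 := Nat.odd_iff.mp hpodd
  have hpp2 : p^2 % 2 = 1 := by
    have := Nat.pow_mod p 2 2; rw [hp2] at this; simpa using this
  obtain ⟨x₁, y₁, hx₁, hy₁, hxy₁⟩ := Nat.dvd_mul.mp hd₁
  obtain ⟨x₂, y₂, hx₂, hy₂, hxy₂⟩ := Nat.dvd_mul.mp hd₂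
  obtain ⟨a₁, ha₁k, rfl⟩ := (Nat.dvd_prime_pow Nat.prime_two).mp hx₁
  obtain ⟨b₁, hb₁, rfl⟩ := (Nat.dvd_prime_pow hp).mp hy₁
  obtain ⟨a₂, ha₂k, rfl⟩ := (Nat.dvd_prime_pow Nat.prime_two).mp hx₂
  obtain ⟨b₂, hb₂, rfl⟩ := (Nat.dvd_prime_pow hp).mp hy₂
  subst hxy₁; subst hxy₂
  have hE0 : 2^(k+1) * (p+1) = p^2 + p + 1 + 2^a₁*p^b₁ + 2^a₂*p^b₂ := by
    have e1 : 2^(k+1)*(1+p+p^2) = 2^(k+1)*(p+1) + 2^(k+1)*p^2 := by ring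
    have e2 : 2*(2^k*p^2) = 2^(k+1)*p^2 := by ring
    omega
  have hQe : 2 ∣ 2^(k+1) * (p+1) := ⟨2^k*(p+1), by ring⟩
  have hodd : ∀ m : ℕ, m ≤ 2 → p^m % 2 = 1 := by
    intro m hm; interval_cases m <;> simp [hpp2, hp2]
  rw [hn]
  rcases Nat.eq_zero_or_pos a₁ with h1 | h1 <;> rcases Nat.eq_zero_or_pos a₂ with h2 | h2
  · exfalso
    subst h1; subst h2
    simp only [pow_zero, one_mul] at hE0
    have := hodd b₁ hb₁; have := hodd b₂ hb₂; omega
  · subst h1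
    simp only [pow_zero, one_mul] at hE0
    exact key' k p hk hp hpodd b₁ b₂ a₂ hb₁ hb₂ h2 ha₂k hE0
  · subst h2
    simp only [pow_zero, one_mul] at hE0
    exact key' k p hk hp hpodd b₂ b₁ a₁ hb₂ hb₁ h1 ha₁k (by omega)
  · exfalso
    have e1 : 2 ∣ 2^a₁*p^b₁ := ⟨2^(a₁-1)*p^b₁, by rw [← mul_assoc]; congr 1; rw [← pow_succ']; congr 1; omega⟩
    have e2 : 2 ∣ 2^a₂*p^b₂ := ⟨2^(a₂-1)*p^b₂, by rw [← mul_assoc]; congr 1; rw [← pow_succ']; congr 1; omega⟩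
    have := hodd 0 (by omega)
    omega
end

section
/- Let a and k be positive integers with 0 ≤ a ≤ k, and set D = 2^(2k+2) + 2^(k+2) − 2^(a+2) − 7. If D is a perfect square, then k = 1 and a = 1. -/
theorem discriminant_sandwich_case_I
    (a k : ℕ) (ha : 0 < a) (hk : 0 < k) (hak : a ≤ k)
    (D : ℤ) (hD : D = 2 ^ (2 * k + 2) + 2 ^ (k + 2) - 2 ^ (a + 2) - 7)
    (hsq : ∃ m : ℤ, D = m ^ 2) :
    k = 1 ∧ a = 1 := by
  have hk1 : k = 1 := by
    by_contra hne
    have hk2 : 2 ≤ k := by omega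
    obtain ⟨m, hm⟩ := hsq
    set x : ℤ := 2 ^ (k + 1) with hx
    have hx2 : (2:ℤ) ^ (2 * k + 2) = x ^ 2 := by
      rw [hx, ← pow_mul]; ring_nf
    have hxk : (2:ℤ) ^ (k + 2) = 2 * x := by rw [hx]; ring
    have hax : (2:ℤ) ^ (a + 2) ≤ 2 * x := by
      rw [← hxk]
      exact pow_le_pow_right₀ (by norm_num) (by omega)
    have hxge : (8:ℤ) ≤ x := by
      rw [hx]
      calc (8:ℤ) = 2 ^ 3 := by norm_num
      _ ≤ 2 ^ (k + 1) := pow_le_pow_right₀ (by norm_num) (by omega)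
    have hapos : (0:ℤ) < 2 ^ (a + 2) := by positivity
    have hD' : m ^ 2 = x ^ 2 + 2 * x - 2 ^ (a + 2) - 7 := by
      rw [← hm, hD, hx2, hxk]
    have hub : m ^ 2 < (x + 1) ^ 2 := by nlinarith
    have hlb : (x - 1) ^ 2 < m ^ 2 := by
      have h4x : 2 ^ (a + 2) + 8 < 4 * x := by
        have h16 : (16:ℤ) ≤ 2 ^ (k + 2) := by
          calc (16:ℤ) = 2 ^ 4 := by norm_num
          _ ≤ 2 ^ (k + 2) := pow_le_pow_right₀ (by norm_num) (by omega)
        rw [hxk] at h16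
        nlinarith
      nlinarith
    have hn0 : 0 ≤ |m| := abs_nonneg m
    have h1 : x - 1 < |m| := by nlinarith [sq_abs m]
    have h2 : |m| < x + 1 := by nlinarith [sq_abs m]
    have hnx : |m| = x := by omega
    have hmx : m ^ 2 = x ^ 2 := by rw [← sq_abs m, hnx]
    rw [hmx] at hD'
    have heq : 2 * x - 2 ^ (a + 2) - 7 = 0 := by linarith
    have ha2 : (2:ℤ) ^ (a + 2) = 2 * 2 ^ (a + 1) := by ring
    have hxx : x = 2 * 2 ^ k := by rw [hx]; ring
    rw [ha2, hxx] at heq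
    set u := (2:ℤ) ^ k
    set v := (2:ℤ) ^ (a + 1)
    omega
  exact ⟨hk1, by omega⟩
end

section
/- Let b and k be non-negative integers and let p be an odd positive integer such that (2^(k+1) − 1)(p^2 + p + 1) = 2^(k+1) · p^2 + 2^b · p + 1. Then p divides 2^k − 1 and p + 1 divides 2^b − 2. -/
theorem case_III_j_eq_one_divisibility
    (k b : ℕ) (p : ℤ) (hpodd : Odd p) (hppos : 0 < p)
    (heq : (2 ^ (k + 1) - 1) * (p ^ 2 + p + 1) = 2 ^ (k + 1) * p ^ 2 + 2 ^ b * p + 1) :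
    p ∣ 2 ^ k - 1 ∧ (p + 1) ∣ 2 ^ b - 2 := by
  obtain ⟨m, hm⟩ := hpodd
  constructor
  · have h2 : p ∣ 2 * (2 ^ k - 1) :=
      ⟨2 ^ b - 2 ^ (k + 1) + p + 1, by linear_combination heq⟩
    have hco : IsCoprime p 2 := ⟨1, -m, by linarith⟩
    exact (IsCoprime.dvd_of_dvd_mul_left hco h2)
  · exact ⟨2 ^ b - 2 ^ (k + 1) + p, by linear_combination heq⟩
end

section
/- There are no integers k, b with 2 ≤ b ≤ k − 1 and odd positive integer p satisfying the equation (2^(k+1) − 1)(p^2 + p + 1) = 2^(k+1) · p^2 + 2^b · p + 1. -/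
theorem case_III_j_eq_one_no_solutions :
    ¬ ∃ (k b : ℕ) (p : ℤ), 2 ≤ b ∧ b ≤ k - 1 ∧ Odd p ∧ 0 < p ∧
      (2 ^ (k + 1) - 1) * (p ^ 2 + p + 1) = 2 ^ (k + 1) * p ^ 2 + 2 ^ b * p + 1 := by
  rintro ⟨k, b, p, hb2, hbk, hodd, hp, heq⟩
  have hk3 : 3 ≤ k := by omega
  set X : ℤ := 2 ^ (k + 1) with hX
  set B : ℤ := 2 ^ b with hB
  have key : X * (p + 1) = p ^ 2 + p + 2 + B * p := by linear_combination heq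
  set A : ℤ := X - B - 1 with hA
  set q : ℤ := 2 * p - A with hq
  have hq2 : q ^ 2 = A ^ 2 + 4 * X - 8 := by
    simp only [hq, hA]
    linear_combination (-4 : ℤ) * key
  have hB4 : (4 : ℤ) ≤ B := by
    calc (4 : ℤ) = 2 ^ 2 := by norm_num
    _ ≤ 2 ^ b := pow_le_pow_right₀ (by norm_num) hb2
  have hBX : 4 * B ≤ X := by
    have : (2 : ℤ) ^ (b + 2) ≤ 2 ^ (k + 1) := pow_le_pow_right₀ (by norm_num) (by omega)
    calc 4 * B = 2 ^ (b + 2) := by rw [hB]; ring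
    _ ≤ X := this
  have hA2 : 0 < A + 2 := by simp only [hA]; linarith
  have h5 : (A + 2) ^ 2 < q ^ 2 := by nlinarith
  have h6 : q ^ 2 < (A + 4) ^ 2 := by nlinarith
  have h7 : A + 2 < |q| := by nlinarith [sq_abs q, abs_nonneg q]
  have h8 : |q| < A + 4 := by nlinarith [sq_abs q, abs_nonneg q]
  have h9 : |q| = A + 3 := by omega
  have h10 : q = A + 3 ∨ q = -(A + 3) := abs_eq (by linarith) |>.mp h9
  have hXe : (2 : ℤ) ∣ X := by rw [hX]; exact dvd_pow_self 2 (by omega)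
  have hBe : (2 : ℤ) ∣ B := by rw [hB]; exact dvd_pow_self 2 (by omega)
  have hqd : q = 2 * p - (X - B - 1) := hq
  omega
end

section
/- Let n = 2^k · p^2 be a 2-near perfect number with omitted divisors d₁ and d₂, where p is an odd prime and k is a positive integer. Then d₁ + d₂ = −p^2 + (2^(k+1) − 1)·p + (2^(k+1) − 1), and d₁ and d₂ have opposite parity (one is even and one is odd). -/
open ArithmeticFunction ArithmeticFunction.sigma

theorem omitted_divisors_sum_and_parity
    (n k p d₁ d₂ : ℕ) (hk : 0 < k) (hp : p.Prime) (hpodd : Odd p)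
    (hn : n = 2 ^ k * p ^ 2)
    (hd₁ : d₁ ∣ n) (hd₂ : d₂ ∣ n) (hd₁pos : 0 < d₁) (hd₂pos : 0 < d₂)
    (hne : d₁ ≠ d₂) (hσ : σ 1 n = 2 * n + d₁ + d₂) :
    (d₁ : ℤ) + d₂ = -(p : ℤ) ^ 2 + (2 ^ (k + 1) - 1) * p + (2 ^ (k + 1) - 1) ∧
      ((Even d₁ ∧ Odd d₂) ∨ (Odd d₁ ∧ Even d₂)) := by
  have hp2 : (p : ℕ) ≠ 2 := by
    rintro rfl
    simp [Nat.odd_iff] at hpodd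
  have hcop : Nat.Coprime (2 ^ k) (p ^ 2) :=
    ((Nat.coprime_primes Nat.prime_two hp).mpr (Ne.symm hp2)).pow k 2
  have hσn : σ 1 n = (2 ^ (k + 1) - 1) * (1 + p + p ^ 2) := by
    rw [hn, isMultiplicative_sigma.map_mul_of_coprime hcop,
      sigma_one_apply_prime_pow Nat.prime_two, sigma_one_apply_prime_pow hp,
      Nat.geomSum_eq (le_refl 2)]
    simp [Finset.sum_range_succ]
  rw [hσn] at hσ
  -- cast to ℤ
  have h2 : (1 : ℕ) ≤ 2 ^ (k + 1) := Nat.one_le_two_pow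
  have hz : ((2 ^ (k + 1) - 1 : ℕ) : ℤ) = 2 ^ (k + 1) - 1 := by
    push_cast [h2]; ring
  have hZ : ((2 ^ (k + 1) : ℤ) - 1) * (1 + p + p ^ 2) = 2 * (2 ^ k * p ^ 2) + d₁ + d₂ := by
    have := congrArg (Nat.cast : ℕ → ℤ) hσ
    push_cast [hz, hn] at this
    linarith
  have hsum : (d₁ : ℤ) + d₂ = -(p : ℤ) ^ 2 + (2 ^ (k + 1) - 1) * p + (2 ^ (k + 1) - 1) := by
    have : (2 : ℤ) ^ (k + 1) = 2 * 2 ^ k := by ring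
    nlinarith [hZ]
  refine ⟨hsum, ?_⟩
  have hoddsum : Odd (d₁ + d₂) := by
    have : Odd ((d₁ : ℤ) + d₂) := by
      rw [hsum]
      have hpo : Odd (p : ℤ) := by exact_mod_cast hpodd
      obtain ⟨m, hm⟩ := hpo
      refine ⟨-2*m^2 - 3*m - 2 + 2^k*(2*m+2), ?_⟩
      rw [hm]; push_cast; ring
    have := Int.odd_coe_nat (d₁ + d₂)
    rw [← this] at *
    exact_mod_cast ‹Odd ((d₁ : ℤ) + d₂)›
  rcases Nat.even_or_odd d₁ with h1 | h1
  · left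
    exact ⟨h1, Nat.odd_add'.mp hoddsum |>.mpr h1⟩
  · right
    exact ⟨h1, Nat.odd_add.mp hoddsum |>.mp h1⟩
end

section
/- There is no 2-near perfect number n = 2^k · p^2 (p an odd prime, k a positive integer) whose omitted divisors have the form d₁ = 2^a with 0 < a ≤ k, and d₂ = p^m with m ∈ {1, 2}. -/
open ArithmeticFunction
open scoped ArithmeticFunction.sigma

lemma geom_two_sum (n : ℕ) : ∑ i ∈ Finset.range n, 2 ^ i = 2 ^ n - 1 := by
  induction n with
  | zero => simp
  | succ n ih =>
    rw [Finset.sum_range_succ, ih]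
    have : 1 ≤ 2 ^ n := Nat.one_le_two_pow
    rw [pow_succ]
    omega

theorem case_2_no_solutions :
    ¬ ∃ (n k p d₁ d₂ a m : ℕ), 0 < k ∧ p.Prime ∧ Odd p ∧
      n = 2 ^ k * p ^ 2 ∧
      d₁ ∣ n ∧ d₂ ∣ n ∧ 0 < d₁ ∧ 0 < d₂ ∧ d₁ ≠ d₂ ∧
      σ 1 n = 2 * n + d₁ + d₂ ∧
      0 < a ∧ a ≤ k ∧ d₁ = 2 ^ a ∧ (m = 1 ∨ m = 2) ∧ d₂ = p ^ m := by
  rintro ⟨n, k, p, d₁, d₂, a, m, hk, hp, hodd, hn, -, -, -, -, -, hσ, ha0, hak, hd1, hm, hd2⟩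
  subst hn hd1 hd2
  have hp2 : p ≠ 2 := by rintro rfl; exact (Nat.not_odd_iff_even.mpr even_two) hodd
  have hp3 : 3 ≤ p := by
    have := hp.two_le; omega
  have hP3 : (3:ℤ) ≤ (p:ℤ) := by exact_mod_cast hp3
  have hcop : Nat.Coprime (2 ^ k) (p ^ 2) :=
    Nat.Coprime.pow _ _ ((Nat.coprime_primes Nat.prime_two hp).mpr (Ne.symm hp2))
  have hσn : σ 1 (2 ^ k * p ^ 2) = (2 ^ (k + 1) - 1) * (1 + p + p ^ 2) := by
    rw [isMultiplicative_sigma.map_mul_of_coprime hcop,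
      sigma_one_apply_prime_pow Nat.prime_two, sigma_one_apply_prime_pow hp,
      geom_two_sum]
    congr 1
    simp [Finset.sum_range_succ]
  rw [hσn] at hσ
  have h2k : (1 : ℕ) ≤ 2 ^ (k + 1) := Nat.one_le_two_pow
  -- cast the main equation to ℤ, with 2^(k+1) = 2 * 2^k
  have E : (2 * (2:ℤ) ^ k - 1) * (1 + p + p ^ 2) = 2 * (2 ^ k * p ^ 2) + 2 ^ a + p ^ m := by
    zify [h2k] at hσ
    rw [show ((2:ℤ) ^ (k+1)) = 2 * 2 ^ k by ring] at hσ
    linarith [hσ]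
  have hA : (2:ℤ) ^ a ≤ 2 ^ k := by
    exact_mod_cast Nat.pow_le_pow_right (by norm_num) hak
  rcases hm with rfl | rfl
  · -- m = 1 : (p+1)(2·2^k - (p+1)) = 2^a
    have key : ((p:ℤ) + 1) * (2 * 2 ^ k - (p + 1)) = 2 ^ a := by
      push_cast at E
      linear_combination E
    have hBpos : (0:ℤ) < 2 * 2 ^ k - (p + 1) := by
      by_contra h
      push_neg at h
      have h1 : ((p:ℤ) + 1) * (2 * 2 ^ k - (p + 1)) ≤ 0 :=
        mul_nonpos_of_nonneg_of_nonpos (by positivity) h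
      have h2 : (0:ℤ) < 2 ^ a := by positivity
      rw [key] at h1
      linarith
    have hlt : p + 1 < 2 ^ (k + 1) := by
      have : ((p:ℤ) + 1) < 2 ^ (k + 1) := by
        rw [show ((2:ℤ) ^ (k+1)) = 2 * 2 ^ k by ring]; linarith
      exact_mod_cast this
    set b : ℕ := 2 ^ (k + 1) - (p + 1) with hb
    have hbZ : (b : ℤ) = 2 * 2 ^ k - (p + 1) := by
      push_cast [hb, Nat.cast_sub hlt.le]
      ring
    have keyN : (p + 1) * b = 2 ^ a := by
      have : ((p:ℤ) + 1) * b = 2 ^ a := by rw [hbZ]; exact key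
      exact_mod_cast this
    obtain ⟨s, hs, hps⟩ := (Nat.dvd_prime_pow Nat.prime_two).mp ⟨b, keyN.symm⟩
    obtain ⟨t, ht, hbt⟩ := (Nat.dvd_prime_pow Nat.prime_two).mp
      ⟨p + 1, by rw [mul_comm]; exact keyN.symm⟩
    rw [hps, hbt, ← pow_add] at keyN
    have hst : s + t = a := Nat.pow_right_injective (le_refl 2) keyN
    have hsum : 2 ^ s + 2 ^ t = 2 ^ (k + 1) := by omega
    have h1 : 2 ^ s < 2 ^ (k + 1) := by have := Nat.one_le_two_pow (n := t); omega
    have h2 : 2 ^ t < 2 ^ (k + 1) := by have := Nat.one_le_two_pow (n := s); omega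
    have hs1 : s ≤ k := by
      have := (Nat.pow_lt_pow_iff_right (a := 2) one_lt_two).mp h1; omega
    have ht1 : t ≤ k := by
      have := (Nat.pow_lt_pow_iff_right (a := 2) one_lt_two).mp h2; omega
    have hs2 : k ≤ s := by
      have hle : 2 ^ k ≤ 2 ^ s := by
        have h2t : 2 ^ t ≤ 2 ^ k := Nat.pow_le_pow_right (by norm_num) ht1
        have : 2 ^ (k + 1) = 2 ^ k + 2 ^ k := by ring
        omega
      exact (Nat.pow_le_pow_iff_right one_lt_two).mp hle
    have ht2 : k ≤ t := by
      have hle : 2 ^ k ≤ 2 ^ t := by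
        have h2s : 2 ^ s ≤ 2 ^ k := Nat.pow_le_pow_right (by norm_num) hs1
        have : 2 ^ (k + 1) = 2 ^ k + 2 ^ k := by ring
        omega
      exact (Nat.pow_le_pow_iff_right one_lt_two).mp hle
    omega
  · -- m = 2 : (p+1)(2·2^k - (2p-1)) = 2^a + 2
    have key : ((p:ℤ) + 1) * (2 * 2 ^ k - (2 * p - 1)) = 2 ^ a + 2 := by
      push_cast at E
      linear_combination E
    have hCpos : (0:ℤ) < 2 * 2 ^ k - (2 * p - 1) := by
      by_contra h
      push_neg at h
      have h1 : ((p:ℤ) + 1) * (2 * 2 ^ k - (2 * p - 1)) ≤ 0 :=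
        mul_nonpos_of_nonneg_of_nonpos (by positivity) h
      have h2 : (0:ℤ) < 2 ^ a := by positivity
      rw [key] at h1
      linarith
    have hge : 2 * (p:ℤ) ≤ 2 * 2 ^ k := by
      have h1 : 2 * (p:ℤ) - 1 < 2 * 2 ^ k := by linarith
      have := Int.add_one_le_iff.mpr h1
      linarith
    -- size bound: 2^k (2p+1) ≤ 2p² + p + 1 < (p+1)(2p+1), so 2^k < p + 1
    have hEk : (2:ℤ) ^ k * (2 * p + 1) ≤ 2 * p ^ 2 + p + 1 := by
      push_cast at E
      nlinarith [E, hA]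
    have hub : (2:ℤ) ^ k < p + 1 := by
      by_contra h
      push_neg at h
      have h1 : ((p:ℤ) + 1) * (2 * p + 1) ≤ 2 ^ k * (2 * p + 1) :=
        mul_le_mul_of_nonneg_right h (by linarith)
      nlinarith
    have hpeq : (p:ℤ) = 2 ^ k := by linarith
    have hpk : p = 2 ^ k := by exact_mod_cast hpeq
    have : (2 : ℕ) ∣ p := hpk ▸ dvd_pow_self 2 hk.ne'
    rw [Nat.odd_iff] at hodd
    omega
end

section
/- Let p be an odd positive integer and let k and b be positive integers such that (2^(k+1) − 1)(p^2 + p + 1) = 2^(k+1) · p^2 + 2^b · p^2 + 1. Then p + 1 divides 2^b + 2. -/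
theorem case_III_j_eq_two_p_add_one_divides
    (k b : ℕ) (p : ℤ) (hk : 0 < k) (hb : 0 < b) (hpodd : Odd p) (hppos : 0 < p)
    (heq : (2 ^ (k + 1) - 1) * (p ^ 2 + p + 1) = 2 ^ (k + 1) * p ^ 2 + 2 ^ b * p ^ 2 + 1) :
    (p + 1) ∣ 2 ^ b + 2 := by
  have key : (2:ℤ)^b + 2 = 2^(k+1)*(p+1) - 2^b*(p^2-1) - (p^2-1) - (p+1) := by
    linear_combination -heq
  rw [key]
  have h1 : (p+1) ∣ p^2 - 1 := ⟨p-1, by ring⟩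
  exact dvd_sub (dvd_sub (dvd_sub (dvd_mul_left _ _) (h1.mul_left _)) h1) dvd_rfl
end

section
/- Let n = 2^k · p^2 be a 2-near perfect number (p an odd prime, k a positive integer) whose omitted divisors are d₁ = 1 and d₂ = 2^b · p^2 for some b with 1 ≤ b ≤ k. Then n = 36, with omitted divisors 1 and 18. -/
open ArithmeticFunction
open scoped ArithmeticFunction.sigma

theorem case_3_implies_n_eq_36
    (n k p b d₁ d₂ : ℕ) (hk : 0 < k) (hp : p.Prime) (hpodd : Odd p)
    (hn : n = 2 ^ k * p ^ 2)
    (hd₁ : d₁ ∣ n) (hd₂ : d₂ ∣ n) (hd₁pos : 0 < d₁) (hd₂pos : 0 < d₂)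
    (hne : d₁ ≠ d₂) (hσ : σ 1 n = 2 * n + d₁ + d₂)
    (hb : 1 ≤ b) (hbk : b ≤ k) (hd₁eq : d₁ = 1) (hd₂eq : d₂ = 2 ^ b * p ^ 2) :
    n = 36 ∧ d₁ = 1 ∧ d₂ = 18 := by
  subst hn hd₁eq hd₂eq
  -- p ≥ 3
  have hp3 : 3 ≤ p := by
    have h2 := hp.two_le
    have ho := Nat.odd_iff.mp hpodd
    omega
  -- compute sigma
  have hcop : Nat.Coprime (2 ^ k) (p ^ 2) := by
    apply Nat.Coprime.pow
    rw [Nat.coprime_primes Nat.prime_two hp]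
    have ho := Nat.odd_iff.mp hpodd
    omega
  have hsig : σ 1 (2 ^ k * p ^ 2) = (∑ j ∈ Finset.range (k+1), 2 ^ j) * (1 + p + p ^ 2) := by
    rw [isMultiplicative_sigma.map_mul_of_coprime hcop,
      sigma_one_apply_prime_pow Nat.prime_two, sigma_one_apply_prime_pow hp]
    congr 1
    simp [Finset.sum_range_succ]
  have hgeom : (∑ j ∈ Finset.range (k+1), 2 ^ j) = 2 ^ (k+1) - 1 := by
    have := Nat.geomSum_eq (le_refl 2) (k+1)
    simpa using this
  rw [hsig, hgeom] at hσ
  -- move to ℤ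
  set P : ℤ := (p : ℤ) with hP
  have hPodd : ∃ m : ℤ, P = 2 * m + 1 := by
    rcases hpodd with ⟨m, hm⟩
    exact ⟨(m : ℤ), by rw [hP, hm]; push_cast; ring⟩
  have hP3 : 3 ≤ P := by rw [hP]; exact_mod_cast hp3
  have hE : (2:ℤ) ^ (k+1) * (P + 1) = (2 ^ b + 1) * P ^ 2 + P + 2 := by
    have h2 : (1:ℕ) ≤ 2 ^ (k+1) := Nat.one_le_two_pow
    have := hσ
    zify [h2] at this
    push_cast at this ⊢
    linear_combination this
  have hb2 : (2:ℤ) ≤ 2 ^ b := by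
    calc (2:ℤ) = 2 ^ 1 := by ring
    _ ≤ 2 ^ b := pow_le_pow_right₀ (by norm_num) hb
  set q : ℤ := 2 ^ (k+1) - (2 ^ b + 1) * P + 2 ^ b with hqdef
  have hq : (P + 1) * q = 2 ^ b + 2 := by
    rw [hqdef]; linear_combination hE
  have hqpos : 0 < q := by nlinarith
  have hdvd : (2:ℤ) ^ (b+1) ∣ P + q := by
    rcases hPodd with ⟨m, hm⟩
    refine ⟨2 ^ (k - b) - m, ?_⟩
    have hk1 : (2:ℤ) ^ (k+1) = 2 ^ (b+1) * 2 ^ (k-b) := by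
      rw [← pow_add]; congr 1; omega
    rw [hqdef, hk1, hm]; ring
  have hpow : (2:ℤ) ^ (b+1) = 2 * 2 ^ b := by rw [pow_succ]; ring
  have h1 : 4 * q ≤ 2 ^ b + 2 := by nlinarith
  have h2 : P + 1 ≤ 2 ^ b + 2 := by nlinarith
  have hub : P + q ≤ 2 ^ (b+1) := by rw [hpow]; linarith
  have heq : P + q = 2 ^ (b+1) := by
    have hle : (2:ℤ) ^ (b+1) ≤ P + q := Int.le_of_dvd (by positivity) hdvd
    omega
  have hkey : (2:ℤ) ^ b * (2 * P + 1) = P ^ 2 + P + 2 := by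
    have hq' : q = 2 ^ (b+1) - P := by omega
    rw [hq'] at hq
    linear_combination hq
  have h7 : (2 * P + 1) ∣ (7:ℤ) := ⟨4 * 2 ^ b - (2 * P + 1), by linear_combination (-4) * hkey⟩
  have h7' : 2 * P + 1 ≤ 7 := Int.le_of_dvd (by norm_num) h7
  have hPeq : P = 3 := by omega
  have hpeq : p = 3 := by
    have : (p:ℤ) = 3 := by rw [← hP]; exact hPeq
    exact_mod_cast this
  have hbval : b = 1 := by
    have : (2:ℤ) ^ b = 2 ^ 1 := by rw [hPeq] at hkey; linarith
    have h2 : (2:ℕ) ^ b = 2 ^ 1 := by exact_mod_cast this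
    exact Nat.pow_right_injective (le_refl 2) h2
  have hkval : k = 2 := by
    have : (2:ℤ) ^ (k+1) = 2 ^ 3 := by
      rw [hPeq, hbval] at hE; linarith
    have h2 : (2:ℕ) ^ (k+1) = 2 ^ 3 := by exact_mod_cast this
    have := Nat.pow_right_injective (le_refl 2) h2
    omega
  subst hpeq hbval hkval
  norm_num
end

section
/- Let n = 2^k · p^2 be a 2-near perfect number (p an odd prime, k a positive integer) whose omitted divisors have the form d₁ = p^j with j ∈ {1, 2} and d₂ = 2^b · p^g with g ∈ {1, 2} and 1 ≤ b ≤ k. Then n = 200, with omitted divisors 25 and 40. -/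
open ArithmeticFunction
open scoped ArithmeticFunction.sigma

/-- geometric sum of powers of two -/
lemma aux_geo2 (n : ℕ) : (∑ i ∈ Finset.range n, 2^i) + 1 = 2^n := by
  induction n with
  | zero => simp
  | succ n ih =>
    rw [Finset.sum_range_succ, pow_succ]
    omega

/-- an odd factor of a power of two is 1 -/
lemma aux_oddFactor (s t o : ℕ) (ho : Odd o) (h : 2^s * o = 2^t) : o = 1 := by
  have hdvd : o ∣ 2^t := ⟨2^s, by rw [← h]; ring⟩
  obtain ⟨u, -, rfl⟩ := (Nat.dvd_prime_pow Nat.prime_two).mp hdvd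
  cases u with
  | zero => rfl
  | succ v =>
    rw [Nat.odd_iff, pow_succ] at ho
    omega

/-- extract the cofactor m with 2^(k+1) = 1 + p*m -/
lemma aux_get_m (k p R : ℕ) (hp3 : 3 ≤ p)
    (h : 2^(k+1)*(1+p) = 1 + p * R) :
    ∃ m, 2^(k+1) = 1 + p * m ∧ Odd m ∧ 1 + m + p*m = R := by
  have hp1 : 1 ≤ 2^(k+1) := Nat.one_le_two_pow
  have e1 : (2^(k+1)*(1+p)) % p = 2^(k+1) % p := by
    rw [mul_add, mul_one, Nat.add_mul_mod_self_right]
  have e2 : (1 + p*R) % p = 1 % p := by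
    rw [mul_comm, Nat.add_mul_mod_self_right]
  have h1 : (1:ℕ) ≡ 2^(k+1) [MOD p] := by
    unfold Nat.ModEq
    rw [← e2, ← h, e1]
  obtain ⟨m, hm⟩ := (Nat.modEq_iff_dvd' hp1).mp h1
  have hmT : 2^(k+1) = 1 + p * m := by omega
  have heven : 2^(k+1) % 2 = 0 := by
    have : 2^(k+1) = 2^k * 2 := pow_succ 2 k
    omega
  have hmodd : Odd m := by
    have hpm : (p*m) % 2 = 1 := by omega
    exact (Nat.odd_mul.mp (Nat.odd_iff.mpr hpm)).2
  refine ⟨m, hmT, hmodd, ?_⟩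
  have hp0 : (p:ℤ) ≠ 0 := by
    have : (0:ℤ) < p := by exact_mod_cast (by omega : 0 < p)
    omega
  have hz : (p:ℤ) * (1 + m + p*m) = p * R := by
    have hZ : ((2:ℤ))^(k+1)*(1+(p:ℤ)) = 1 + (p:ℤ) * R := by exact_mod_cast h
    have hmTZ : ((2:ℤ))^(k+1) = 1 + (p:ℤ) * m := by exact_mod_cast hmT
    linear_combination hZ - (1+(p:ℤ))*hmTZ
  have : ((1 + m + p*m : ℕ) : ℤ) = ((R:ℕ) : ℤ) := by
    push_cast
    exact mul_left_cancel₀ hp0 hz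
  exact_mod_cast this

theorem case_5_implies_n_eq_200
    (n k p b j g d₁ d₂ : ℕ) (hk : 0 < k) (hp : p.Prime) (hpodd : Odd p)
    (hn : n = 2 ^ k * p ^ 2)
    (hd₁ : d₁ ∣ n) (hd₂ : d₂ ∣ n) (hd₁pos : 0 < d₁) (hd₂pos : 0 < d₂)
    (hne : d₁ ≠ d₂) (hσ : σ 1 n = 2 * n + d₁ + d₂)
    (hj : j = 1 ∨ j = 2) (hg : g = 1 ∨ g = 2) (hb : 1 ≤ b) (hbk : b ≤ k)
    (hd₁eq : d₁ = p ^ j) (hd₂eq : d₂ = 2 ^ b * p ^ g) :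
    n = 200 ∧ d₁ = 25 ∧ d₂ = 40 := by
  subst hn hd₁eq hd₂eq
  have hp2 : p ≠ 2 := by rintro rfl; exact (by decide : ¬ Odd 2) hpodd
  have hp3 : 3 ≤ p := by have := hp.two_le; omega
  have hcop : Nat.Coprime (2^k) (p^2) :=
    Nat.Coprime.pow _ _ ((Nat.coprime_primes Nat.prime_two hp).mpr (Ne.symm hp2))
  have hσ' : (∑ i ∈ Finset.range (k+1), 2^i) * (∑ i ∈ Finset.range 3, p^i)
      = 2 * (2^k * p^2) + p^j + 2^b*p^g := by
    have h := hσ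
    rw [isMultiplicative_sigma.map_mul_of_coprime hcop, sigma_one_apply, sigma_one_apply,
        Nat.sum_divisors_prime_pow Nat.prime_two, Nat.sum_divisors_prime_pow hp] at h
    exact h
  have hS := aux_geo2 (k+1)
  have hsump : (∑ i ∈ Finset.range 3, p^i) = 1 + p + p^2 := by
    rw [Finset.sum_range_succ, Finset.sum_range_succ, Finset.sum_range_one]
    ring
  rw [hsump] at hσ'
  have key : 2^(k+1) * (1+p) = 1 + p + p^2 + p^j + 2^b * p^g := by
    have h1 : ((∑ i ∈ Finset.range (k+1), 2^i : ℕ) : ℤ) * (1+(p:ℤ)+(p:ℤ)^2)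
        = 2*(2^k*(p:ℤ)^2) + (p:ℤ)^j + 2^b*(p:ℤ)^g := by exact_mod_cast hσ'
    have h2 : ((∑ i ∈ Finset.range (k+1), 2^i : ℕ) : ℤ) + 1 = 2^(k+1) := by
      exact_mod_cast hS
    have hgz : ((2:ℤ))^(k+1) * (1+(p:ℤ)) = 1 + (p:ℤ) + (p:ℤ)^2 + (p:ℤ)^j + 2^b * (p:ℤ)^g := by
      linear_combination h1 - (1+(p:ℤ)+(p:ℤ)^2) * h2
    exact_mod_cast hgz
  have h4 : 4 ≤ 2^(k+1) := by
    calc (4:ℕ) = 2^2 := rfl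
    _ ≤ 2^(k+1) := Nat.pow_le_pow_right (by norm_num) (by omega)
  have hbk2 : 2^b ≤ 2^k := Nat.pow_le_pow_right (by norm_num) hbk
  have h2b : 2 ≤ 2^b := by
    calc (2:ℕ) = 2^1 := rfl
    _ ≤ 2^b := Nat.pow_le_pow_right (by norm_num) hb
  have hkk : 2^(k+1) = 2 * 2^k := by ring
  rcases hj with rfl | rfl <;> rcases hg with rfl | rfl
  · -- j = 1, g = 1 : contradiction
    exfalso
    obtain ⟨m, hmT, hmodd, hmeq⟩ := aux_get_m k p (2 + p + 2^b) hp3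
      (by rw [key]; ring)
    have hm0 : m ≠ 0 := by rintro rfl; omega
    obtain ⟨m', rfl⟩ : ∃ m', m = m' + 1 := ⟨m-1, by omega⟩
    have h2 : m' * (p+1) = 2^b := by
      have hz : (m':ℤ) * ((p:ℤ)+1) = 2^b := by
        have hmeqZ : (1:ℤ) + ((m':ℤ)+1) + (p:ℤ)*((m':ℤ)+1) = 2 + (p:ℤ) + 2^b := by
          exact_mod_cast hmeq
        linear_combination hmeqZ
      exact_mod_cast hz
    have hdvd : p + 1 ∣ 2^b := ⟨m', by rw [← h2]; ring⟩
    obtain ⟨t, htb, hpt⟩ := (Nat.dvd_prime_pow Nat.prime_two).mp hdvd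
    have hm'2 : m' = 2^(b-t) := by
      have e0 : 2^(b-t) * 2^t = 2^b := by rw [← pow_add]; congr 1; omega
      refine Nat.eq_of_mul_eq_mul_right ((by positivity : (0:ℕ) < 2^t)) ?_
      rw [e0, ← hpt]; exact h2
    have hbt1 : t < b := by
      by_contra hcon
      push_neg at hcon
      have hbt0 : b - t = 0 := by omega
      rw [hbt0, pow_zero] at hm'2
      rw [Nat.odd_iff] at hmodd
      omega
    have e1 : 2^t * 2^(b-t) = 2^b := by rw [← pow_add]; congr 1; omega
    have e2 : 2^(b+1) ≤ 2^(k+1) := Nat.pow_le_pow_right (by norm_num) (by omega)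
    have e3 : 2^t * 2 ≤ 2^b := by
      calc 2^t * 2 = 2^(t+1) := (pow_succ 2 t).symm
      _ ≤ 2^b := Nat.pow_le_pow_right (by norm_num) (by omega)
    have e4 : 2^b * 2 = 2^(b+1) := (pow_succ 2 b).symm
    have e6 : 1 ≤ 2^(b-t) := Nat.one_le_two_pow
    have e5 : p * (m' + 1) + 2^(b-t) + 1 = 2^b + 2^t := by
      have hptZ : ((p:ℤ)+1) = 2^t := by exact_mod_cast hpt
      have hm'2Z : (m':ℤ) = 2^(b-t) := by exact_mod_cast hm'2
      have e1Z : ((2:ℤ))^t * 2^(b-t) = 2^b := by exact_mod_cast e1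
      have : (p:ℤ) * ((m':ℤ) + 1) + 2^(b-t) + 1 = 2^b + 2^t := by
        linear_combination (p:ℤ) * hm'2Z + ((2:ℤ)^(b-t)+1) * hptZ + e1Z
      exact_mod_cast this
    omega
  · -- j = 1, g = 2 : contradiction
    exfalso
    obtain ⟨m, hmT, hmodd, hmeq⟩ := aux_get_m k p (2 + p + 2^b * p) hp3
      (by rw [key]; ring)
    have hm0 : m ≠ 0 := by rintro rfl; omega
    obtain ⟨m', rfl⟩ : ∃ m', m = m' + 1 := ⟨m-1, by omega⟩
    have h2 : m' * (p+1) = 2^b * p := by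
      have hz : (m':ℤ) * ((p:ℤ)+1) = 2^b * p := by
        have hmeqZ : (1:ℤ) + ((m':ℤ)+1) + (p:ℤ)*((m':ℤ)+1) = 2 + (p:ℤ) + 2^b * p := by
          exact_mod_cast hmeq
        linear_combination hmeqZ
      exact_mod_cast hz
    have hcop2 : Nat.Coprime (p+1) p := by simp
    have hdvd : p + 1 ∣ 2^b * p := ⟨m', by rw [← h2]; ring⟩
    have hdvd2 : p + 1 ∣ 2^b := hcop2.dvd_of_dvd_mul_right hdvd
    obtain ⟨t, htb, hpt⟩ := (Nat.dvd_prime_pow Nat.prime_two).mp hdvd2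
    have e1 : 2^(b-t) * 2^t = 2^b := by rw [← pow_add]; congr 1; omega
    have hm'2 : m' = 2^(b-t) * p := by
      refine Nat.eq_of_mul_eq_mul_right ((by positivity : (0:ℕ) < 2^t)) ?_
      calc m' * 2^t = 2^b * p := by rw [← hpt]; exact h2
      _ = 2^(b-t) * p * 2^t := by rw [← e1]; ring
    have hbt1 : t < b := by
      by_contra hcon
      push_neg at hcon
      have hbt0 : b - t = 0 := by omega
      rw [hbt0, pow_zero, one_mul] at hm'2
      rw [Nat.odd_iff] at hmodd
      rw [Nat.odd_iff] at hpodd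
      omega
    have hkey2 : 2^(k+1) = 2^t + 2^(b-t) * p^2 := by
      have hptZ : ((p:ℤ)+1) = 2^t := by exact_mod_cast hpt
      have hm'2Z : (m':ℤ) = 2^(b-t) * p := by exact_mod_cast hm'2
      have hmTZ : ((2:ℤ))^(k+1) = 1 + (p:ℤ) * ((m':ℤ)+1) := by exact_mod_cast hmT
      have : ((2:ℤ))^(k+1) = 2^t + 2^(b-t) * (p:ℤ)^2 := by
        linear_combination hmTZ + (p:ℤ) * hm'2Z + hptZ
      exact_mod_cast this
    have h9 : 9 ≤ p^2 := by
      calc (9:ℕ) = 3^2 := rfl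
      _ ≤ p^2 := Nat.pow_le_pow_left hp3 2
    rcases Nat.lt_trichotomy t (b-t) with hlt | heq | hgt
    · -- t < b - t
      have e : 2^t * 2^(b-t-t) = 2^(b-t) := by rw [← pow_add]; congr 1; omega
      have h5 : 2^t * (1 + 2^(b-t-t) * p^2) = 2^(k+1) := by
        rw [hkey2, mul_add, mul_one, ← mul_assoc, e]
      have hEe : Even (2^(b-t-t)) := by
        refine ⟨2^(b-t-t-1), ?_⟩
        rw [← two_mul, ← pow_succ']
        congr 1; omega
      have ho : Odd (1 + 2^(b-t-t) * p^2) := by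
        simpa [add_comm] using (hEe.mul_right (p^2)).add_one
      have := aux_oddFactor t (k+1) _ ho h5
      have hposx : 0 < 2^(b-t-t) * p^2 :=
        Nat.mul_pos ((by positivity : (0:ℕ) < 2^(b-t-t))) (by omega)
      omega
    · -- t = b - t
      obtain ⟨r, hr⟩ := hpodd
      have h5 : 2^(t+1) * (2*(r*r) + 2*r + 1) = 2^(k+1) := by
        rw [← heq] at hkey2
        have hkey2Z : ((2:ℤ))^(k+1) = 2^t + 2^t * (p:ℤ)^2 := by exact_mod_cast hkey2
        have hrZ : (p:ℤ) = 2*r + 1 := by exact_mod_cast hr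
        have : ((2:ℤ))^(t+1) * (2*((r:ℤ)*(r:ℤ)) + 2*(r:ℤ) + 1) = 2^(k+1) := by
          linear_combination -hkey2Z - ((2:ℤ)^t*((p:ℤ)+2*(r:ℤ)+1)) * hrZ
        exact_mod_cast this
      have ho : Odd (2*(r*r) + 2*r + 1) := by
        rw [Nat.odd_iff]; omega
      have := aux_oddFactor (t+1) (k+1) _ ho h5
      have : r = 0 := by omega
      omega
    · -- b - t < t
      have e : 2^(b-t) * 2^(t-(b-t)) = 2^t := by rw [← pow_add]; congr 1; omega
      have h5 : 2^(b-t) * (2^(t-(b-t)) + p^2) = 2^(k+1) := by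
        rw [hkey2, mul_add, e]
      have hE : 2^(t-(b-t)) % 2 = 0 := by
        have hh : 2^(t-(b-t)) = 2 * 2^(t-(b-t)-1) := by
          rw [← pow_succ']; congr 1; omega
        rw [hh]; exact Nat.mul_mod_right 2 _
      have hp2odd : p^2 % 2 = 1 := Nat.odd_iff.mp (hpodd.pow)
      have ho : Odd (2^(t-(b-t)) + p^2) := by
        rw [Nat.odd_iff]; omega
      have hfin := aux_oddFactor (b-t) (k+1) _ ho h5
      have h1 : (1:ℕ) ≤ 2^(t-(b-t)) := Nat.one_le_two_pow
      linarith
  · -- j = 2, g = 1 : the solution case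
    obtain ⟨m, hmT, hmodd, hmeq⟩ := aux_get_m k p (1 + 2*p + 2^b) hp3
      (by rw [key]; ring)
    have hm0 : m ≠ 0 := by rintro rfl; omega
    have hm1 : m ≠ 1 := by rintro rfl; omega
    have hm3 : 3 ≤ m := by rw [Nat.odd_iff] at hmodd; omega
    have hpm3 : p*3 ≤ p*m := Nat.mul_le_mul_left p hm3
    have hk2p : 2^k ≤ 2*p := by omega
    have hmle : m ≤ 3 := by
      by_contra hcon
      push_neg at hcon
      have h5 : 5 ≤ m := by rw [Nat.odd_iff] at hmodd; omega
      have : p*5 ≤ p*m := Nat.mul_le_mul_left p h5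
      omega
    have hm3' : m = 3 := by omega
    subst hm3'
    have hb2 : 2^b = p + 3 := by omega
    have hkey3 : 2^(k+1) + 8 = 3 * 2^b := by omega
    have hble : b ≤ 3 := by
      by_contra hcon
      push_neg at hcon
      have e1 : 2^(k+1) = 16 * 2^(k-3) := by
        rw [show (16:ℕ) = 2^4 from rfl, ← pow_add]; congr 1; omega
      have e2 : 2^b = 16 * 2^(b-4) := by
        rw [show (16:ℕ) = 2^4 from rfl, ← pow_add]; congr 1; omega
      omega
    interval_cases b
    · exfalso; norm_num at hkey3; omega
    · exfalso
      have h44 : 2^(k+1) = 2^2 := by norm_num at hkey3 ⊢; omega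
      have := Nat.pow_right_injective (le_refl 2) h44
      omega
    · have h16 : 2^(k+1) = 2^4 := by norm_num at hkey3 ⊢; omega
      have hk4 := Nat.pow_right_injective (le_refl 2) h16
      have hk3 : k = 3 := by omega
      have hp5 : p = 5 := by norm_num at hb2; omega
      subst hk3; subst hp5
      norm_num
  · -- j = 2, g = 2 : contradiction
    exfalso
    obtain ⟨m, hmT, hmodd, hmeq⟩ := aux_get_m k p (1 + 2*p + 2^b * p) hp3
      (by rw [key]; ring)
    have h2 : m * (p+1) = p * (2 + 2^b) := by
      have hz : (m:ℤ) * ((p:ℤ)+1) = (p:ℤ) * (2 + 2^b) := by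
        have hmeqZ : (1:ℤ) + (m:ℤ) + (p:ℤ)*(m:ℤ) = 1 + 2*(p:ℤ) + 2^b * p := by
          exact_mod_cast hmeq
        linear_combination hmeqZ
      exact_mod_cast hz
    have hcopp : Nat.Coprime p (p+1) := by simp
    have hpm : p ∣ m := by
      refine hcopp.dvd_of_dvd_mul_right ?_
      rw [h2]; exact dvd_mul_right p (2+2^b)
    obtain ⟨c, rfl⟩ := hpm
    have hcodd : Odd c := (Nat.odd_mul.mp hmodd).2
    have hc0 : c ≠ 0 := by rintro rfl; simp at hmT
    have hceq : c * (p+1) = 2 + 2^b := by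
      refine Nat.eq_of_mul_eq_mul_left (show 0 < p by omega) ?_
      rw [← mul_assoc]; exact h2
    by_cases hc : c = 1
    · subst hc
      have hpb : p = 2^b + 1 := by omega
      have e1 : 2^(k+1) = 4 * 2^(k-1) := by
        rw [show (4:ℕ) = 2^2 from rfl, ← pow_add]; congr 1; omega
      have e2 : 2^b = 2 * 2^(b-1) := by
        rw [← pow_succ']; congr 1; omega
      have e3 : p * (p * 1) = 4*(2^(b-1)*2^(b-1)) + 4*2^(b-1) + 1 := by
        rw [hpb, e2]; ring
      omega
    · have hc3 : 3 ≤ c := by rw [Nat.odd_iff] at hcodd; omega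
      obtain ⟨r, hr⟩ := hpodd
      have hkid : 2^(k+1) + 1 = 2^(b+1) * r + 2*p + c := by
        have hmTZ : ((2:ℤ))^(k+1) = 1 + (p:ℤ)*((p:ℤ)*c) := by exact_mod_cast hmT
        have hceqZ : (c:ℤ) * ((p:ℤ)+1) = 2 + 2^b := by exact_mod_cast hceq
        have hrZ : (p:ℤ) = 2*(r:ℤ) + 1 := by exact_mod_cast hr
        have : ((2:ℤ))^(k+1) + 1 = 2^(b+1) * (r:ℤ) + 2*(p:ℤ) + c := by
          linear_combination hmTZ + 2*(r:ℤ)*hceqZ + ((c:ℤ)*((p:ℤ)+1) - 2)*hrZ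
        exact_mod_cast this
      have hsplit : 2^(k+1) = 2^(b+1) * 2^(k-b) := by
        rw [← pow_add]; congr 1; omega
      rw [hsplit] at hkid
      have hbound : 2^(b+1) ≤ 2*p + c - 1 := by
        by_cases hre : 2^(k-b) ≤ r
        · have := Nat.mul_le_mul_left (2^(b+1)) hre
          omega
        · push_neg at hre
          have hre1 : r + 1 ≤ 2^(k-b) := by omega
          have h6 := Nat.mul_le_mul_left (2^(b+1)) hre1
          have hx : 2^(b+1)*(r+1) = 2^(b+1)*r + 2^(b+1) := by ring
          omega
      have hcp : c*p + c = 2 + 2^b := by rw [← hceq]; ring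
      have hdouble : 2^(b+1) = 2*2^b := by ring
      have hcp3 : 3*p ≤ c*p := Nat.mul_le_mul_right p hc3
      omega
end

section
/- Let n = 2^k · p be a strongly 2-near perfect number with p an odd prime and k, a positive integers satisfying 0 < a ≤ k and p · (1 + 2^(k−a)) = 2^(k+1) − 2^a − 1. Then k < 2a. -/
open ArithmeticFunction
open scoped ArithmeticFunction.sigma

theorem strongly_two_near_perfect_k_lt_two_a
    (n k a p : ℕ) (hk : 0 < k) (ha : 0 < a) (hak : a ≤ k)
    (hp : p.Prime) (hpodd : Odd p) (hn : n = 2 ^ k * p)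
    (hstrong : ∃ d₁ d₂ : ℕ, d₁ ∣ n ∧ d₂ ∣ n ∧ 0 < d₁ ∧ 0 < d₂ ∧ d₁ ≠ d₂ ∧
      d₁ * d₂ = n ∧ σ 1 n = 2 * n + d₁ + d₂)
    (heq : p * (1 + 2 ^ (k - a)) = 2 ^ (k + 1) - 2 ^ a - 1) :
    k < 2 * a := by
  by_contra hcon
  push_neg at hcon
  obtain ⟨m, rfl⟩ : ∃ m, k = a + m := ⟨k - a, by omega⟩
  have hm : a ≤ m := by omega
  rw [show a + m - a = m by omega] at heq
  -- move to ℤ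
  have hle1 : (2:ℕ) ^ a ≤ 2 ^ (a + m + 1) := Nat.pow_le_pow_right (by norm_num) (by omega)
  have hlt1 : (2:ℕ) ^ a < 2 ^ (a + m + 1) := Nat.pow_lt_pow_right (by norm_num) (by omega)
  have key : (p:ℤ) * (1 + 2 ^ m) = 2 ^ (a + m + 1) - 2 ^ a - 1 := by
    zify [hle1, show 1 ≤ 2 ^ (a + m + 1) - 2 ^ a from by omega] at heq
    exact_mod_cast heq
  have h2m : (0:ℤ) < 2 ^ m := by positivity
  have h2a : (0:ℤ) < 2 ^ a := by positivity
  have hsplit : (2:ℤ) ^ (a + m + 1) = 2 ^ (a + 1) * 2 ^ m := by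
    rw [← pow_add]; congr 1; omega
  have hp2 : (p:ℤ) < 2 ^ (a + 1) := by
    have h1 : (p:ℤ) * (1 + 2 ^ m) < 2 ^ (a + 1) * (1 + 2 ^ m) := by
      rw [key, hsplit]
      have : (0:ℤ) < 2 ^ (a + 1) := by positivity
      nlinarith
    exact lt_of_mul_lt_mul_right h1 (by positivity)
  have hq : ((2:ℤ) ^ (a + 1) - p) * (1 + 2 ^ m) = 3 * 2 ^ a + 1 := by
    linear_combination -key
  have hq1 : (1:ℤ) ≤ 2 ^ (a + 1) - p := by omega
  have hmono : (2:ℤ) ^ a ≤ 2 ^ m := by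
    exact_mod_cast Nat.pow_le_pow_right (by norm_num) hm
  have hq3 : (2:ℤ) ^ (a + 1) - p < 3 := by
    by_contra hc
    push_neg at hc
    nlinarith
  have hcases : (2:ℤ) ^ (a + 1) - p = 1 ∨ (2:ℤ) ^ (a + 1) - p = 2 := by omega
  obtain ⟨x, hx⟩ : ∃ x : ℤ, (2:ℤ) ^ a = 2 * x := ⟨2 ^ (a - 1), by
    rw [← pow_succ']; congr 1; omega⟩
  rcases hcases with hc | hc
  · rw [hc, one_mul] at hq
    have h2m3 : (2:ℤ) ^ m = 3 * 2 ^ a := by linarith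
    have hpow : (2:ℤ) ^ m = 2 ^ a * 2 ^ (m - a) := by
      rw [← pow_add]; congr 1; omega
    have h3 : (2:ℤ) ^ (m - a) = 3 :=
      mul_left_cancel₀ (ne_of_gt h2a) (by linear_combination h2m3 - hpow)
    rcases Nat.eq_zero_or_pos (m - a) with he | he
    · rw [he] at h3; norm_num at h3
    · have hdvd : (2:ℤ) ∣ 2 ^ (m - a) := dvd_pow_self 2 (by omega)
      rw [h3] at hdvd
      norm_num at hdvd
  · rw [hc] at hq
    generalize (2:ℤ) ^ m = X at hq
    omega
end

section
/- Let n = 2^k · p be a strongly 2-near perfect number with p an odd prime and k, a positive integers satisfying 0 < a ≤ k and p · (1 + 2^(k−a)) = 2^(k+1) − 2^a − 1. Then k = a + 2, the omitted divisors are d₁ = 2^a and d₂ = 4p, p satisfies 5p = 2^(a+3) − 2^a − 1, and a ≡ 3 (mod 4). -/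
open ArithmeticFunction
open scoped ArithmeticFunction.sigma

private lemma aux_pow_ne (p k i j : ℕ) (hp : p.Prime) (hpodd : Odd p)
    (hij : i < j) (hjk : j ≤ k)
    (E : 2 ^ i + p * 2 ^ (k - i) = 2 ^ j + p * 2 ^ (k - j)) : False := by
  have h1 : (2:ℕ) ^ j = 2 ^ i * 2 ^ (j - i) := by rw [← pow_add]; congr 1; omega
  have h2 : (2:ℕ) ^ (k - i) = 2 ^ (k - j) * 2 ^ (j - i) := by rw [← pow_add]; congr 1; omega
  rw [h1, h2] at E
  have ht : (2:ℕ) ≤ 2 ^ (j - i) := by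
    calc (2:ℕ) = 2 ^ 1 := by norm_num
    _ ≤ 2 ^ (j - i) := Nat.pow_le_pow_right (by norm_num) (by omega)
  have EZ : (2:ℤ) ^ i + (p:ℤ) * (2 ^ (k - j) * 2 ^ (j - i)) =
      2 ^ i * 2 ^ (j - i) + (p:ℤ) * 2 ^ (k - j) := by exact_mod_cast E
  have h0 : ((p:ℤ) * 2 ^ (k - j) - 2 ^ i) * ((2:ℤ) ^ (j - i) - 1) = 0 := by
    linear_combination EZ
  rcases mul_eq_zero.mp h0 with h | h
  · have hnat : p * 2 ^ (k - j) = 2 ^ i := by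
      have : (p:ℤ) * 2 ^ (k - j) = 2 ^ i := by linarith
      exact_mod_cast this
    have hpd : p ∣ 2 ^ i := ⟨2 ^ (k - j), hnat.symm ▸ rfl⟩
    have hp2 : p = 2 := (Nat.prime_dvd_prime_iff_eq hp Nat.prime_two).mp
      (hp.dvd_of_dvd_pow hpd)
    rw [hp2] at hpodd
    simp [Nat.odd_iff] at hpodd
  · have : ((2:ℤ)) ≤ 2 ^ (j - i) := by exact_mod_cast ht
    linarith

private lemma divpair (p k a e f : ℕ) (hp : p.Prime) (hpodd : Odd p) (hak : a ≤ k)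
    (hmul : e * f = 2 ^ k * p) (hpf : p ∣ f)
    (hsum : e + f + p + 1 = 2 ^ (k + 1))
    (heq' : p * 2 ^ (k - a) + p + 2 ^ a + 1 = 2 ^ (k + 1)) :
    e = 2 ^ a ∧ f = 2 ^ (k - a) * p := by
  obtain ⟨c, rfl⟩ := hpf
  have hec : e * c = 2 ^ k := by
    have h1 : e * c * p = 2 ^ k * p := by rw [← hmul]; ring
    exact Nat.eq_of_mul_eq_mul_right hp.pos h1
  have hedvd : e ∣ 2 ^ k := ⟨c, hec.symm⟩
  obtain ⟨i, hik, rfl⟩ := (Nat.dvd_prime_pow Nat.prime_two).mp hedvd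
  have hc : c = 2 ^ (k - i) := by
    have h1 : (2:ℕ) ^ i * c = 2 ^ i * 2 ^ (k - i) := by
      rw [hec, ← pow_add]; congr 1; omega
    exact Nat.eq_of_mul_eq_mul_left (pow_pos (by norm_num) i) h1
  subst hc
  have E : 2 ^ i + p * 2 ^ (k - i) = 2 ^ a + p * 2 ^ (k - a) := by
    linarith [hsum, heq']
  have hia : i = a := by
    rcases lt_trichotomy i a with h | h | h
    · exact absurd E (fun E => aux_pow_ne p k i a hp hpodd h hak E)
    · exact h
    · exact absurd E.symm (fun E => aux_pow_ne p k a i hp hpodd h hik E)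
  subst hia
  exact ⟨rfl, mul_comm p _⟩

theorem strongly_two_near_perfect_description
    (n k a p d₁ d₂ : ℕ) (hk : 0 < k) (ha : 0 < a) (hak : a ≤ k)
    (hp : p.Prime) (hpodd : Odd p) (hn : n = 2 ^ k * p)
    (hd₁ : d₁ ∣ n) (hd₂ : d₂ ∣ n) (hd₁pos : 0 < d₁) (hd₂pos : 0 < d₂)
    (hne : d₁ ≠ d₂) (hmul : d₁ * d₂ = n)
    (hσ : σ 1 n = 2 * n + d₁ + d₂)
    (heq : p * (1 + 2 ^ (k - a)) = 2 ^ (k + 1) - 2 ^ a - 1) :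
    k = a + 2 ∧
      ((d₁ = 2 ^ a ∧ d₂ = 4 * p) ∨ (d₂ = 2 ^ a ∧ d₁ = 4 * p)) ∧
      5 * p = 2 ^ (a + 3) - 2 ^ a - 1 ∧ a % 4 = 3 := by
  -- p ≠ 2
  have hne2 : p ≠ 2 := by rintro rfl; simp [Nat.odd_iff] at hpodd
  have hcop : Nat.Coprime (2 ^ k) p :=
    Nat.Coprime.pow_left k ((Nat.coprime_primes Nat.prime_two hp).mpr (Ne.symm hne2))
  -- σ computation
  have hσ2 : σ 1 (2 ^ k) = 2 ^ (k + 1) - 1 := by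
    rw [sigma_one_apply_prime_pow Nat.prime_two, Nat.geomSum_eq le_rfl]
    norm_num
  have hσp : σ 1 p = p + 1 := by
    have := sigma_one_apply_prime_pow (p := p) (i := 1) hp
    simp [Finset.sum_range_succ] at this
    omega
  have hσn : σ 1 n = (2 ^ (k + 1) - 1) * (p + 1) := by
    rw [hn, isMultiplicative_sigma.map_mul_of_coprime hcop, hσ2, hσp]
  -- key sum equation
  have h1 : (1:ℕ) ≤ 2 ^ (k + 1) := Nat.one_le_two_pow
  have hsum : d₁ + d₂ + p + 1 = 2 ^ (k + 1) := by
    have e : (2 ^ (k + 1) - 1 + 1) * (p + 1) = 2 ^ (k + 1) * p + 2 ^ (k + 1) := by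
      rw [Nat.sub_add_cancel h1]; ring
    rw [add_mul, one_mul] at e
    have hsig : (2 ^ (k + 1) - 1) * (p + 1) = 2 ^ (k + 1) * p + d₁ + d₂ := by
      rw [← hσn, hσ, hn]; ring
    rw [hsig] at e
    linarith [e]
  -- rewrite k = a + m
  obtain ⟨m, rfl⟩ := Nat.exists_eq_add_of_le hak
  have hma : a + m - a = m := by omega
  rw [hma] at heq
  have hpa : 2 ^ a + 1 ≤ 2 ^ (a + m + 1) := by
    have h2 : (2:ℕ) ^ a ≤ 2 ^ (a + m) := Nat.pow_le_pow_right (by norm_num) (by omega)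
    have h3 : (2:ℕ) ^ (a + m + 1) = 2 ^ (a + m) + 2 ^ (a + m) := by ring
    have h4 : (1:ℕ) ≤ 2 ^ (a + m) := Nat.one_le_two_pow
    omega
  have heq' : p * (1 + 2 ^ m) + 2 ^ a + 1 = 2 ^ (a + m + 1) := by omega
  -- m ≥ 1
  have hm1 : 1 ≤ m := by
    by_contra h
    have hm0 : m = 0 := by omega
    subst hm0
    have h2 : (2:ℕ) ^ a = 2 * 2 ^ (a - 1) := by
      conv_lhs => rw [show a = a - 1 + 1 from by omega]
      ring
    have h3 : (2:ℕ) ^ (a + 0 + 1) = 2 * (2 * 2 ^ (a - 1)) := by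
      rw [show a + 0 + 1 = a - 1 + 1 + 1 from by omega]; ring
    rw [h3, h2] at heq'
    omega
  -- divisibility : (2^m+1) ∣ 3*2^a+1 over ℤ
  have heqZ : (p:ℤ) * (1 + 2 ^ m) + 2 ^ a + 1 = 2 ^ (a + m + 1) := by exact_mod_cast heq'
  have hdvd : ((2:ℤ) ^ m + 1) ∣ 3 * 2 ^ a + 1 := by
    have hd1 : ((2:ℤ) ^ m + 1) ∣ 2 ^ (a + 1) * (2 ^ m + 1) := dvd_mul_left _ _
    have hd2 : ((2:ℤ) ^ m + 1) ∣ (p:ℤ) * (2 ^ m + 1) := dvd_mul_left _ _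
    have key : 2 ^ (a + 1) * ((2:ℤ) ^ m + 1) - (p:ℤ) * (2 ^ m + 1) = 3 * 2 ^ a + 1 := by
      have hpw : (2:ℤ) ^ (a + m + 1) = 2 ^ a * 2 ^ m * 2 := by
        rw [pow_add, pow_add]; ring
      have hpw2 : (2:ℤ) ^ (a + 1) = 2 ^ a * 2 := by rw [pow_add]; ring
      rw [hpw2]
      have : (p:ℤ) * (2 ^ m + 1) = 2 ^ a * 2 ^ m * 2 - 2 ^ a - 1 := by
        rw [← hpw]; linarith [heqZ]
      rw [this]; ring
    exact key ▸ dvd_sub hd1 hd2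
  -- modular reduction
  set q := a / m with hq
  set s := a % m with hs
  have hsm : s < m := Nat.mod_lt _ (by omega)
  have hqa : m * q + s = a := Nat.div_add_mod a m
  have hpowa : (2:ℤ) ^ a = ((2:ℤ) ^ m) ^ q * 2 ^ s := by
    rw [← pow_mul, ← pow_add, hqa]
  have hd3 : ((2:ℤ) ^ m + 1) ∣ ((2:ℤ) ^ m) ^ q - (-1) ^ q := by
    have := sub_dvd_pow_sub_pow ((2:ℤ) ^ m) (-1) q
    simpa using this
  have hdvd2 : ((2:ℤ) ^ m + 1) ∣ 3 * (-1) ^ q * 2 ^ s + 1 := by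
    have heqn : 3 * (-1:ℤ) ^ q * 2 ^ s + 1 =
        (3 * 2 ^ a + 1) - 3 * 2 ^ s * (((2:ℤ) ^ m) ^ q - (-1) ^ q) := by
      rw [hpowa]; ring
    rw [heqn]
    exact dvd_sub hdvd (Dvd.dvd.mul_left hd3 _)
  -- basic pow facts for omega
  have hS1 : (1:ℕ) ≤ 2 ^ s := Nat.one_le_two_pow
  have h2S : 2 * 2 ^ s ≤ 2 ^ m := by
    calc 2 * 2 ^ s = 2 ^ (s + 1) := by ring
    _ ≤ 2 ^ m := Nat.pow_le_pow_right (by norm_num) (by omega)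
  -- main case split
  have key : m = 2 ∧ a % 4 = 3 := by
    rcases Nat.even_or_odd q with hqe | hqo
    · exfalso
      have hpos : (-1:ℤ) ^ q = 1 := hqe.neg_one_pow
      rw [hpos] at hdvd2
      have hdN : (2 ^ m + 1 : ℕ) ∣ 3 * 2 ^ s + 1 := by exact_mod_cast hdvd2
      obtain ⟨c, hc⟩ := hdN
      have hc0 : c ≠ 0 := by rintro rfl; omega
      have hc2 : c < 2 := by
        by_contra h
        have : (2 ^ m + 1) * 2 ≤ (2 ^ m + 1) * c := Nat.mul_le_mul_left _ (by omega)
        omega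
      have hc1 : c = 1 := by omega
      rw [hc1, mul_one] at hc
      have h3d : (3:ℕ) ∣ 2 ^ m := ⟨2 ^ s, by omega⟩
      have := (Nat.prime_three).dvd_of_dvd_pow h3d
      omega
    · have hneg : (-1:ℤ) ^ q = -1 := hqo.neg_one_pow
      rw [hneg] at hdvd2
      have hdvd3 : ((2:ℤ) ^ m + 1) ∣ 3 * 2 ^ s - 1 := by
        have : (3 * (-1) * 2 ^ s + 1 : ℤ) = -(3 * 2 ^ s - 1) := by ring
        rw [this] at hdvd2
        exact (dvd_neg).mp hdvd2
      have hdN : (2 ^ m + 1 : ℕ) ∣ 3 * 2 ^ s - 1 := by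
        have hcast : ((3 * 2 ^ s - 1 : ℕ) : ℤ) = 3 * 2 ^ s - 1 := by
          push_cast [Nat.cast_sub (show (1:ℕ) ≤ 3 * 2 ^ s by omega)]
          ring
        exact_mod_cast hcast ▸ hdvd3
      obtain ⟨c, hc⟩ := hdN
      have hc0 : c ≠ 0 := by rintro rfl; omega
      have hc2 : c < 2 := by
        by_contra h
        have : (2 ^ m + 1) * 2 ≤ (2 ^ m + 1) * c := Nat.mul_le_mul_left _ (by omega)
        omega
      have hc1 : c = 1 := by omega
      rw [hc1, mul_one] at hc
      have hc' : 3 * 2 ^ s = 2 ^ m + 2 := by omega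
      have hms : m ≤ s + 1 := by
        by_contra h
        have h4S : 2 ^ (s + 2) ≤ 2 ^ m := Nat.pow_le_pow_right (by norm_num) (by omega)
        have : (2:ℕ) ^ (s + 2) = 4 * 2 ^ s := by ring
        omega
      have hms' : m = s + 1 := by omega
      have hM : (2:ℕ) ^ m = 2 * 2 ^ s := by rw [hms']; ring
      have hSs : (2:ℕ) ^ s = 2 := by omega
      have hs1 : s = 1 := by
        have : (2:ℕ) ^ s = 2 ^ 1 := by rw [hSs]; norm_num
        exact Nat.pow_right_injective le_rfl this
      have hm2 : m = 2 := by omega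
      refine ⟨hm2, ?_⟩
      have hq1 : q % 2 = 1 := Nat.odd_iff.mp hqo
      have hqa' : 2 * q + 1 = a := by rw [← hm2, ← hs1]; exact hqa
      omega
  obtain ⟨hm2, ha4⟩ := key
  subst hm2
  refine ⟨rfl, ?_, ?_, ha4⟩
  · -- divisor identification
    have hpd : p ∣ d₁ * d₂ := by rw [hmul, hn]; exact dvd_mul_left _ _
    have heq'' : p * 2 ^ (a + 2 - a) + p + 2 ^ a + 1 = 2 ^ (a + 2 + 1) := by
      have : a + 2 - a = 2 := by omega
      rw [this]
      have h5 : p * (1 + 2 ^ 2) = p * 2 ^ 2 + p := by ring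
      omega
    rcases (Nat.Prime.dvd_mul hp).mp hpd with hpf | hpf
    · right
      have := divpair p (a + 2) a d₂ d₁ hp hpodd (by omega)
        (by rw [← hn, ← hmul]; ring) hpf (by omega) heq''
      refine ⟨this.1, ?_⟩
      rw [this.2, show a + 2 - a = 2 from by omega]
      norm_num
    · left
      have := divpair p (a + 2) a d₁ d₂ hp hpodd (by omega) (by rw [← hn]; exact hmul) hpf (by omega) heq''
      refine ⟨this.1, ?_⟩
      rw [this.2, show a + 2 - a = 2 from by omega]
      norm_num
  · -- 5p = 2^(a+3) - 2^a - 1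
    have h8 : (2:ℕ) ^ (a + 3) = 8 * 2 ^ a := by ring
    have h8' : (2:ℕ) ^ (a + 2 + 1) = 8 * 2 ^ a := by ring
    have h5 : p * (1 + 2 ^ 2) = 5 * p := by ring
    rw [h5, h8'] at heq'
    omega
end

section
/- Let a and b be positive integers. If 2^b + 1 divides 3 · 2^a + 1, then b = 2. -/
theorem two_pow_add_one_dvd (a b : ℕ) (ha : 0 < a) (hb : 0 < b)
    (h : 2 ^ b + 1 ∣ 3 * 2 ^ a + 1) : b = 2 := by
  set m : ℕ := 2 ^ b + 1 with hm_def
  set q := a / b with hq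
  set r := a % b with hr_def
  have hr : r < b := Nat.mod_lt a hb
  have ha' : a = b * q + r := (Nat.div_add_mod a b).symm
  have hdvd : (m : ℤ) ∣ 3 * 2 ^ a + 1 := by exact_mod_cast h
  have h2b : (2 : ℤ) ^ b ≡ -1 [ZMOD (m : ℤ)] := by
    apply Int.modEq_iff_dvd.mpr
    push_cast [hm_def]
    exact ⟨-1, by ring⟩
  have h2a : (2 : ℤ) ^ a ≡ (-1) ^ q * 2 ^ r [ZMOD (m : ℤ)] := by
    calc (2 : ℤ) ^ a = ((2:ℤ) ^ b) ^ q * 2 ^ r := by rw [ha', pow_add, pow_mul]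
    _ ≡ (-1) ^ q * 2 ^ r [ZMOD (m:ℤ)] := (h2b.pow q).mul_right _
  have key : (m : ℤ) ∣ 3 * ((-1) ^ q * 2 ^ r) + 1 := by
    have h1 : 3 * ((-1:ℤ) ^ q * 2 ^ r) + 1 ≡ 3 * 2 ^ a + 1 [ZMOD (m:ℤ)] :=
      ((h2a.symm.mul_left 3).add_right 1)
    exact (Int.modEq_zero_iff_dvd.mp (h1.trans ((Int.modEq_zero_iff_dvd).mpr hdvd)))
  have hrb : 2 ^ r * 2 ≤ 2 ^ b := by
    calc 2 ^ r * 2 = 2 ^ (r+1) := by ring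
    _ ≤ 2 ^ b := Nat.pow_le_pow_right (by norm_num) (by omega)
  have h1r : 1 ≤ 2 ^ r := Nat.one_le_two_pow
  rcases Nat.even_or_odd q with hev | hod
  · rw [hev.neg_one_pow, one_mul] at key
    have keyn : m ∣ 3 * 2 ^ r + 1 := by exact_mod_cast key
    obtain ⟨k, hk⟩ := keyn
    have hkpos : 1 ≤ k := by
      rcases Nat.eq_zero_or_pos k with h0 | h0
      · subst h0; omega
      · exact h0
    have hklt : k < 2 := by
      by_contra hge
      push_neg at hge
      have := Nat.mul_le_mul_left m hge
      omega
    have hk1 : k = 1 := by omega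
    rw [hk1, mul_one, hm_def] at hk
    have h3 : (3:ℕ) ∣ 2 ^ b := ⟨2 ^ r, by omega⟩
    have := (Nat.prime_three).dvd_of_dvd_pow (n := b) (m := 2) h3
    omega
  · rw [hod.neg_one_pow] at key
    have key' : (m : ℤ) ∣ 3 * 2 ^ r - 1 := by
      have h2 : (m : ℤ) ∣ -(3 * (-1 * 2 ^ r) + 1) := dvd_neg.mpr key
      rw [show -(3 * (-1 * 2 ^ r) + 1 : ℤ) = 3 * 2 ^ r - 1 by ring] at h2
      exact h2
    have h1r' : 1 ≤ 3 * 2 ^ r := by omega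
    have keyn : m ∣ 3 * 2 ^ r - 1 := by
      have hcast : ((3 * 2 ^ r - 1 : ℕ) : ℤ) = 3 * 2 ^ r - 1 := by
        push_cast [h1r']
        ring
      exact_mod_cast hcast ▸ key'
    obtain ⟨k, hk⟩ := keyn
    have hkpos : 1 ≤ k := by
      rcases Nat.eq_zero_or_pos k with h0 | h0
      · subst h0; omega
      · exact h0
    have hklt : k < 2 := by
      by_contra hge
      push_neg at hge
      have := Nat.mul_le_mul_left m hge
      omega
    have hk1 : k = 1 := by omega
    rw [hk1, mul_one, hm_def] at hk
    have heq : 3 * 2 ^ r = 2 ^ b + 2 := by omega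
    rcases Nat.eq_zero_or_pos r with hr0 | hrpos'
    · simp [hr0] at heq
      have : 2 ≤ 2 ^ b := Nat.one_lt_two_pow_iff.mpr (by omega)
      omega
    · have hb2 : 2 ≤ b := by omega
      have e1 : 2 ^ r = 2 * 2 ^ (r - 1) := by
        rw [← pow_succ']; congr 1; omega
      have e2 : 2 ^ b = 2 * 2 ^ (b - 1) := by
        rw [← pow_succ']; congr 1; omega
      have heq2 : 3 * 2 ^ (r - 1) = 2 ^ (b - 1) + 1 := by omega
      have hbodd : 2 ∣ 2 ^ (b - 1) := dvd_pow_self 2 (by omega)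
      rcases Nat.lt_or_ge r 2 with hr2 | hr2
      · have hr1 : r = 1 := by omega
        rw [hr1] at heq2
        simp at heq2
        have hpow : 2 ^ (b - 1) = 2 ^ 1 := by omega
        have := Nat.pow_right_injective (le_refl 2) hpow
        omega
      · have : 2 ∣ 2 ^ (r - 1) := dvd_pow_self 2 (by omega)
        omega
end

section
/- Let k be a positive integer such that p = 2^k − 1 is prime, and let n = 2^k · p. Then n is 2-near perfect with omitted divisors 1 and p, i.e. σ(n) = 2n + 1 + p. -/
open ArithmeticFunction
open scoped ArithmeticFunction.sigma

theorem family_one_is_two_near_perfect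
    (k p n : ℕ) (hk : 0 < k) (hpeq : p = 2 ^ k - 1) (hp : p.Prime)
    (hn : n = 2 ^ k * p) :
    σ 1 n = 2 * n + 1 + p := by
  have h2 : (2:ℕ) ≤ 2 ^ k := Nat.one_lt_two_pow (by omega)
  have hpodd : Odd p := by
    rcases hp.eq_two_or_odd' with h | h
    · exfalso
      rcases Nat.lt_or_ge k 2 with hk2 | hk2
      · interval_cases k <;> omega
      · have : (4:ℕ) ≤ 2 ^ k := by
          calc (4:ℕ) = 2^2 := rfl
          _ ≤ 2^k := Nat.pow_le_pow_right (by norm_num) hk2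
        omega
    · exact h
  have hcop : Nat.Coprime (2 ^ k) p := by
    apply Nat.Coprime.pow_left
    rcases hpodd with ⟨m, hm⟩
    simp [Nat.coprime_comm, Nat.Prime.coprime_iff_not_dvd hp, hm, Nat.two_dvd_ne_zero,
      Nat.add_mul_mod_self_left]
  have hmul := isMultiplicative_sigma (k := 1) |>.map_mul_of_coprime hcop
  have hs2 : σ 1 (2 ^ k) = 2 ^ (k+1) - 1 := by
    rw [sigma_one_apply_prime_pow Nat.prime_two, Nat.geomSum_eq (le_refl 2)]
    simp
  have hsp : σ 1 p = p + 1 := by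
    rw [sigma_one_apply, hp.divisors]
    rw [Finset.sum_pair hp.one_lt.ne]; omega
  rw [hn, hmul, hs2, hsp]
  have hpk : 2 ^ k = p + 1 := by omega
  have hk1 : 2 ^ (k+1) = 2 * (p+1) := by rw [pow_succ, mul_comm, hpk]
  have : 2 * (p+1) - 1 = 2*p+1 := by omega
  rw [hk1, hpk, this]
  ring
end

section
/- Let k, a, b be integers with 0 < a < b ≤ k such that p = 2^(k+1) − 2^a − 2^b − 1 is prime, and let n = 2^k · p. Then n is 2-near perfect with omitted divisors 2^a and 2^b, i.e. σ(n) = 2n + 2^a + 2^b. -/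
open ArithmeticFunction
open scoped ArithmeticFunction.sigma

lemma sum_two_pow (n : ℕ) : ∑ j ∈ Finset.range n, 2 ^ j = 2 ^ n - 1 := by
  induction n with
  | zero => simp
  | succ m ih =>
    rw [Finset.sum_range_succ, ih, pow_succ]
    have : 1 ≤ 2 ^ m := Nat.one_le_two_pow
    omega

theorem family_two_is_two_near_perfect
    (k a b p n : ℕ) (ha : 0 < a) (hab : a < b) (hbk : b ≤ k)
    (hpeq : p = 2 ^ (k + 1) - 2 ^ a - 2 ^ b - 1) (hp : p.Prime)
    (hn : n = 2 ^ k * p) :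
    σ 1 n = 2 * n + 2 ^ a + 2 ^ b := by
  have hle1 : 2 ^ a + 1 ≤ 2 ^ b := by
    calc 2 ^ a + 1 ≤ 2 ^ a + 2 ^ a := by
          have : 1 ≤ 2 ^ a := Nat.one_le_two_pow
          omega
      _ = 2 ^ (a + 1) := by ring
      _ ≤ 2 ^ b := Nat.pow_le_pow_right (by norm_num) hab
  have hle2 : 2 ^ b + 2 ^ b = 2 ^ (b + 1) := by ring
  have hle3 : 2 ^ (b + 1) ≤ 2 ^ (k + 1) :=
    Nat.pow_le_pow_right (by norm_num) (by omega)
  have hs : 2 ^ a + 2 ^ b + 1 ≤ 2 ^ (k + 1) := by omega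
  have hx : 2 ^ (k + 1) = (p + 1) + (2 ^ a + 2 ^ b) := by omega
  -- p is odd
  have e1 : 2 ∣ 2 ^ a := dvd_pow_self 2 ha.ne'
  have e2 : 2 ∣ 2 ^ b := dvd_pow_self 2 (by omega)
  have e3 : (2 : ℕ) ∣ 2 ^ (k + 1) := dvd_pow_self 2 (by omega)
  have hodd : p % 2 = 1 := by omega
  have hcop : Nat.Coprime (2 ^ k) p :=
    Nat.Coprime.pow_left _ ((Nat.coprime_primes Nat.prime_two hp).mpr (by omega))
  have hmul : σ 1 n = σ 1 (2 ^ k) * σ 1 p := by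
    rw [hn, isMultiplicative_sigma.map_mul_of_coprime hcop]
  have h2 : σ 1 (2 ^ k) = 2 ^ (k + 1) - 1 := by
    rw [sigma_one_apply_prime_pow Nat.prime_two, sum_two_pow]
  have h3 : σ 1 p = p + 1 := by
    rw [show p = p ^ 1 by ring, sigma_one_apply_prime_pow hp]
    simp
  rw [hmul, h2, h3, hn, hx]
  have h1 : 1 ≤ 2 ^ (k+1) := Nat.one_le_two_pow
  have hk : 2 ^ (k + 1) = 2 * 2 ^ k := by ring
  have g1 : p + 1 + (2 ^ a + 2 ^ b) - 1 = p + (2 ^ a + 2 ^ b) := by omega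
  have g2 : 2 * (2 ^ k * p) = (p + 1 + (2 ^ a + 2 ^ b)) * p := by
    rw [← hx]; ring
  rw [g1, g2]; ring
end

section
/- Let k, a, b be integers with 0 < a < b ≤ k, and let p be a prime satisfying p · (1 + 2^a + 2^b) = 2^(k+1) − 1. Then n = 2^k · p is 2-near perfect with omitted divisors 2^a · p and 2^b · p, i.e. σ(n) = 2n + 2^a · p + 2^b · p. -/
open ArithmeticFunction
open scoped ArithmeticFunction.sigma

theorem family_four_is_two_near_perfect
    (k a b p n : ℕ) (ha : 0 < a) (hab : a < b) (hbk : b ≤ k)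
    (hpeq : p * (1 + 2 ^ a + 2 ^ b) = 2 ^ (k + 1) - 1) (hp : p.Prime)
    (hn : n = 2 ^ k * p) :
    σ 1 n = 2 * n + 2 ^ a * p + 2 ^ b * p := by
  have hk1 : 1 ≤ 2 ^ (k + 1) := Nat.one_le_two_pow
  have hne : p ≠ 2 := by
    rintro rfl
    have h2 : (2 : ℕ) ∣ 2 ^ (k + 1) - 1 := ⟨_, hpeq.symm⟩
    have h3 : (2 : ℕ) ∣ 2 ^ (k + 1) := dvd_pow_self 2 k.succ_ne_zero
    omega
  have hcop : Nat.Coprime (2 ^ k) p :=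
    Nat.Coprime.pow_left k ((Nat.coprime_primes Nat.prime_two hp).2 (Ne.symm hne))
  have h1 : σ 1 (2 ^ k) = 2 ^ (k + 1) - 1 := by
    rw [sigma_one_apply_prime_pow Nat.prime_two, Nat.geomSum_eq (le_refl 2)]
    simp
  have h2 : σ 1 p = p + 1 := by
    rw [sigma_one_apply, Nat.Prime.sum_divisors hp]
  rw [hn, isMultiplicative_sigma.map_mul_of_coprime hcop, h1, h2, Nat.sub_mul, one_mul]
  have hpow : 2 ^ (k + 1) = p * (1 + 2 ^ a + 2 ^ b) + 1 := by omega
  have expand : 2 ^ (k + 1) * (p + 1)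
      = 2 * (2 ^ k * p) + 2 ^ a * p + 2 ^ b * p + (p + 1) := by
    have e1 : 2 ^ (k + 1) * (p + 1) = 2 ^ k * 2 * p + 2 ^ (k + 1) := by
      rw [pow_succ]; ring
    rw [e1, hpow]; ring
  omega
end
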